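/- arXiv:1904.12989 — 6 statements merged into one kernel-verified Lean document; each statement's English description precedes it below -/
import Mathlib

section
/- Let $t_1 \ge 0$ and $t_0 \ge 1$ be integers and let $(a_t)$, $(b_t)$, $(c_t)$ be real sequences satisfying the recurrence $a_{t+1} = \left(1 - \frac{b_t}{t+t_1}\right) a_t + c_t$ for all $t \ge t_0$. Let $(s_t)$ be a sequence of positive real numbers with $\lim_{t\to\infty} s_t/s_{t+1} = 1$, and set $d_t = t(1 - s_t/s_{t+1})$. Assume the limits $b = \lim_{t\to\infty} b_t$, $c = \lim_{t\to\infty} c_t \cdot t / s_t$, and $d = \lim_{t\to\infty} d_t$ all exist, and that $b + d > 1$. Then $\lim_{t\to\infty} a_t/s_t$ exists and equals $c/(b+d)$. -/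
open Filter Topology

/-- Lemma 4 (from Avin et al.): if a real sequence satisfies the recurrence
`a (t+1) = (1 - b t / (t + t₁)) * a t + c t` for `t ≥ t₀`, and `s` is a positive
sequence with `s t / s (t+1) → 1`, `d t = t * (1 - s t / s (t+1))`, and the limits
`b t → b`, `c t * t / s t → c`, `d t → d` exist with `b + d > 1`, then
`a t / s t → c / (b + d)`. -/
theorem stmt_0 (t₁ t₀ : ℕ) (ht₀ : 1 ≤ t₀)
    (a b c s : ℕ → ℝ)
    (hrec : ∀ t : ℕ, t₀ ≤ t → a (t + 1) = (1 - b t / ((t : ℝ) + (t₁ : ℝ))) * a t + c t)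
    (hspos : ∀ t, 0 < s t)
    (hs : Tendsto (fun t : ℕ => s t / s (t + 1)) atTop (𝓝 1))
    (B C D : ℝ)
    (hb : Tendsto b atTop (𝓝 B))
    (hc : Tendsto (fun t : ℕ => c t * (t : ℝ) / s t) atTop (𝓝 C))
    (hd : Tendsto (fun t : ℕ => (t : ℝ) * (1 - s t / s (t + 1))) atTop (𝓝 D))
    (hBD : 1 < B + D) :
    Tendsto (fun t : ℕ => a t / s t) atTop (𝓝 (C / (B + D))) := by
  have hBD0 : (0:ℝ) < B + D := lt_trans one_pos hBD
  set L : ℝ := C / (B + D) with hLdef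
  set q : ℕ → ℝ := fun t => (1 - b t / ((t : ℝ) + (t₁ : ℝ))) * (s t / s (t + 1)) with hqdef
  set e : ℕ → ℝ := fun t => c t / s (t + 1) + (q t - 1) * L with hedef
  set y : ℕ → ℝ := fun t => a t / s t - L with hydef
  -- the recurrence in terms of y
  have hrec' : ∀ t, t₀ ≤ t → y (t + 1) = q t * y t + e t := by
    intro t ht
    have h1 := (hspos t).ne'
    have h2 := (hspos (t+1)).ne'
    have h3 : ((t:ℝ) + (t₁:ℝ)) ≠ 0 := by
      have h4 : (1:ℝ) ≤ (t:ℝ) := by exact_mod_cast le_trans ht₀ ht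
      have h5 : (0:ℝ) ≤ (t₁:ℝ) := Nat.cast_nonneg _
      positivity
    simp only [hydef, hqdef, hedef, hrec t ht]
    field_simp
    ring
  have hnat : Tendsto (fun t : ℕ => (t : ℝ)) atTop atTop := tendsto_natCast_atTop_atTop
  have hdenom : Tendsto (fun t : ℕ => (t : ℝ) + (t₁:ℝ)) atTop atTop :=
    tendsto_atTop_add_const_right _ _ hnat
  have hfrac : Tendsto (fun t : ℕ => (t:ℝ) / ((t:ℝ) + (t₁:ℝ))) atTop (𝓝 1) := by
    have h0 : Tendsto (fun t : ℕ => (t₁:ℝ) / ((t:ℝ) + (t₁:ℝ))) atTop (𝓝 0) :=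
      tendsto_const_nhds.div_atTop hdenom
    have h1 : Tendsto (fun t : ℕ => 1 - (t₁:ℝ) / ((t:ℝ) + (t₁:ℝ))) atTop (𝓝 (1 - 0)) :=
      tendsto_const_nhds.sub h0
    rw [sub_zero] at h1
    refine Tendsto.congr' ?_ h1
    filter_upwards [eventually_ge_atTop 1] with t ht
    have h4 : (1:ℝ) ≤ (t:ℝ) := by exact_mod_cast ht
    have h5 : (0:ℝ) ≤ (t₁:ℝ) := Nat.cast_nonneg _
    have h6 : ((t:ℝ) + (t₁:ℝ)) ≠ 0 := by positivity
    field_simp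
    ring
  have hq1 : Tendsto q atTop (𝓝 1) := by
    have hbdiv : Tendsto (fun t : ℕ => b t / ((t:ℝ) + (t₁:ℝ))) atTop (𝓝 0) :=
      hb.div_atTop hdenom
    have h := ((tendsto_const_nhds (x := (1:ℝ))).sub hbdiv).mul hs
    rw [hqdef]
    simpa using h
  have hF1 : Tendsto (fun t : ℕ => (t:ℝ) * (1 - q t)) atTop (𝓝 (B + D)) := by
    have h := hd.add ((hs.mul hb).mul hfrac)
    rw [show D + 1 * B * 1 = B + D by ring] at h
    refine h.congr' ?_
    filter_upwards [eventually_ge_atTop 1] with t ht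
    have h4 : (1:ℝ) ≤ (t:ℝ) := by exact_mod_cast ht
    have h5 : (0:ℝ) ≤ (t₁:ℝ) := Nat.cast_nonneg _
    have h6 : ((t:ℝ) + (t₁:ℝ)) ≠ 0 := by positivity
    have h7 := (hspos t).ne'
    have h8 := (hspos (t+1)).ne'
    simp only [hqdef]
    field_simp
    ring
  have hF2 : Tendsto (fun t : ℕ => (t:ℝ) * e t) atTop (𝓝 0) := by
    have h := (hc.mul hs).sub (hF1.mul (tendsto_const_nhds (x := L)))
    have hz : C * 1 - (B + D) * L = 0 := by
      rw [hLdef]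
      field_simp
      ring
    rw [hz] at h
    refine h.congr ?_
    intro t
    have h1 := (hspos t).ne'
    have h2 := (hspos (t+1)).ne'
    simp only [hedef]
    field_simp
    ring
  have hy0 : Tendsto y atTop (𝓝 0) := by
    rw [NormedAddCommGroup.tendsto_nhds_zero]
    intro ε hε
    have hA : ∀ᶠ t : ℕ in atTop, 1 ≤ (t:ℝ) * (1 - q t) :=
      hF1.eventually (eventually_ge_nhds hBD)
    have hqpos : ∀ᶠ t : ℕ in atTop, 0 ≤ q t :=
      hq1.eventually (eventually_ge_nhds (by norm_num : (0:ℝ) < 1))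
    have hE : ∀ᶠ t : ℕ in atTop, ‖(t:ℝ) * e t‖ < ε / 2 :=
      (NormedAddCommGroup.tendsto_nhds_zero.mp hF2) (ε/2) (half_pos hε)
    have hall : ∀ᶠ t : ℕ in atTop,
        t₀ ≤ t ∧ 2 ≤ t ∧ 0 ≤ q t ∧ 1 ≤ (t:ℝ) * (1 - q t) ∧ (t:ℝ) * |e t| ≤ ε / 2 := by
      filter_upwards [eventually_ge_atTop t₀, eventually_ge_atTop 2, hqpos, hA, hE]
        with t h1 h2 h3 h4 h5
      exact ⟨h1, h2, h3, h4, le_of_lt (by simpa [Real.norm_eq_abs, abs_mul] using h5)⟩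
    obtain ⟨T, hT⟩ := eventually_atTop.mp hall
    set K : ℝ := ((T:ℝ) - 1) * (|y T| - ε/2) with hKdef
    have key : ∀ t, T ≤ t → ((t:ℝ) - 1) * (|y t| - ε/2) ≤ K := by
      intro t ht
      induction t, ht using Nat.le_induction with
      | base => rw [hKdef]
      | succ n hn ih =>
        obtain ⟨h1, h2, h3, h4, h5⟩ := hT n hn
        have hn0 : (0:ℝ) < (n:ℝ) := by
          have : (2:ℝ) ≤ (n:ℝ) := by exact_mod_cast h2
          linarith
        have hrecn := hrec' n h1
        have hqle : q n ≤ 1 - 1/(n:ℝ) := by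
          have hdd : (1:ℝ)/(n:ℝ) ≤ 1 - q n := by
            rw [div_le_iff₀ hn0, mul_comm]
            exact h4
          linarith
        have heb : |e n| ≤ (ε/2) / (n:ℝ) := (le_div_iff₀' hn0).mpr h5
        have habs : |y (n+1)| ≤ q n * |y n| + |e n| := by
          rw [hrecn]
          calc |q n * y n + e n| ≤ |q n * y n| + |e n| := abs_add_le _ _
            _ = q n * |y n| + |e n| := by rw [abs_mul, abs_of_nonneg h3]
        have hmul : q n * |y n| ≤ (1 - 1/(n:ℝ)) * |y n| :=
          mul_le_mul_of_nonneg_right hqle (abs_nonneg _)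
        have expand : (1 - 1/(n:ℝ)) * (|y n| - ε/2)
            = (1 - 1/(n:ℝ)) * |y n| + (ε/2)/(n:ℝ) - ε/2 := by
          field_simp
          ring
        have step : |y (n+1)| - ε/2 ≤ (1 - 1/(n:ℝ)) * (|y n| - ε/2) := by
          linarith
        calc ((↑(n+1):ℝ) - 1) * (|y (n+1)| - ε/2)
            = (n:ℝ) * (|y (n+1)| - ε/2) := by push_cast; ring
          _ ≤ (n:ℝ) * ((1 - 1/(n:ℝ)) * (|y n| - ε/2)) :=
              mul_le_mul_of_nonneg_left step hn0.le
          _ = ((n:ℝ) - 1) * (|y n| - ε/2) := by field_simp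
          _ ≤ K := ih
    have hKlim : Tendsto (fun t : ℕ => K / ((t:ℝ) - 1)) atTop (𝓝 0) :=
      tendsto_const_nhds.div_atTop (tendsto_atTop_add_const_right _ _ hnat)
    have hKev : ∀ᶠ t : ℕ in atTop, K / ((t:ℝ) - 1) < ε/2 :=
      hKlim.eventually (eventually_lt_nhds (half_pos hε))
    filter_upwards [eventually_ge_atTop T, eventually_ge_atTop 2, hKev] with t h1 h2 h3
    have ht1 : (0:ℝ) < (t:ℝ) - 1 := by
      have : (2:ℝ) ≤ (t:ℝ) := by exact_mod_cast h2
      linarith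
    have hk := key t h1
    have hyd : |y t| - ε/2 ≤ K / ((t:ℝ) - 1) := by
      rw [le_div_iff₀ ht1, mul_comm]
      exact hk
    rw [Real.norm_eq_abs]
    linarith
  have h := hy0.add_const L
  rw [zero_add] at h
  refine h.congr ?_
  intro t
  simp [hydef]
end

section
/- Let $(y_t)_{t\ge 1}$ be a sequence of strictly positive real numbers. Assume that $y = \lim_{t\to\infty} y_t$ exists (and is finite) and that $\Gamma = \lim_{t\to\infty} \frac{y_{t+1} \cdot t}{\sum_{j=1}^{t} y_j}$ exists. Then: if $y > 0$ we have $\Gamma = 1$, and if $y = 0$ we have $\Gamma \le 1$. -/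
open Filter Topology

/-- Lemma (from Avin et al.): for a sequence of strictly positive reals `y`,
if `y t → Y` and `y (t+1) * t / ∑_{j=1}^t y j → Γ`, then `Y > 0` implies `Γ = 1`
and `Y = 0` implies `Γ ≤ 1`. -/
theorem stmt_1 (y : ℕ → ℝ) (hy : ∀ t : ℕ, 1 ≤ t → 0 < y t)
    (Y Γ : ℝ)
    (hY : Tendsto y atTop (𝓝 Y))
    (hΓ : Tendsto (fun t : ℕ => y (t + 1) * (t : ℝ) / ∑ j ∈ Finset.Icc 1 t, y j)
      atTop (𝓝 Γ)) :
    (0 < Y → Γ = 1) ∧ (Y = 0 → Γ ≤ 1) := by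
  set S : ℕ → ℝ := fun t => ∑ j ∈ Finset.Icc 1 t, y j with hS
  have hSsucc : ∀ t : ℕ, S (t + 1) = S t + y (t + 1) := by
    intro t
    show (∑ j ∈ Finset.Icc 1 (t + 1), y j) = (∑ j ∈ Finset.Icc 1 t, y j) + y (t + 1)
    rw [Finset.sum_Icc_succ_top (by omega : 1 ≤ t + 1)]
  have hSpos : ∀ t : ℕ, 1 ≤ t → 0 < S t := by
    intro t ht
    apply Finset.sum_pos
    · intro i hi
      exact hy i (Finset.mem_Icc.mp hi).1
    · exact ⟨1, Finset.mem_Icc.mpr ⟨le_refl 1, ht⟩⟩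
  have hIcc : ∀ t : ℕ, S t = ∑ i ∈ Finset.range t, y (i + 1) := by
    intro t
    induction t with
    | zero => simp [hS]
    | succ n ih => rw [hSsucc, Finset.sum_range_succ, ih]
  have hcesaro : Tendsto (fun t : ℕ => S t / (t : ℝ)) atTop (𝓝 Y) := by
    have h1 : Tendsto (fun i : ℕ => y (i + 1)) atTop (𝓝 Y) :=
      hY.comp (tendsto_add_atTop_nat 1)
    have := h1.cesaro
    refine this.congr ?_
    intro n
    rw [hIcc, inv_mul_eq_div]
  constructor
  · -- case Y > 0
    intro hYpos
    have hne : Tendsto (fun t : ℕ => y (t + 1) / (S t / (t : ℝ))) atTop (𝓝 (Y / Y)) :=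
      Tendsto.div (hY.comp (tendsto_add_atTop_nat 1)) hcesaro (ne_of_gt hYpos)
    rw [div_self (ne_of_gt hYpos)] at hne
    have heq : ∀ᶠ t : ℕ in atTop,
        y (t + 1) / (S t / (t : ℝ)) = y (t + 1) * (t : ℝ) / S t := by
      filter_upwards [eventually_ge_atTop 1] with t ht
      have htpos : (0 : ℝ) < t := by exact_mod_cast ht
      field_simp
    have := hne.congr' heq
    exact tendsto_nhds_unique hΓ this
  · -- case Y = 0
    intro hY0
    by_contra hΓ1
    push_neg at hΓ1
    set c : ℝ := (1 + Γ) / 2 with hc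
    have hc1 : 1 < c := by rw [hc]; linarith
    have hcΓ : c < Γ := by rw [hc]; linarith
    have hev : ∀ᶠ t : ℕ in atTop, c ≤ y (t + 1) * (t : ℝ) / S t :=
      hΓ.eventually_const_le hcΓ
    obtain ⟨N, hN⟩ := (hev.and (eventually_ge_atTop 1)).exists_forall_of_atTop
    -- for t ≥ N: y (t+1) ≥ c * S t / t, and S t / t is nondecreasing from N
    have key : ∀ t : ℕ, N ≤ t → S N / (N : ℝ) ≤ S t / (t : ℝ) := by
      intro t ht
      induction t with
      | zero => simpa [Nat.le_zero.mp ht] using le_refl _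
      | succ n ih =>
        rcases Nat.lt_or_ge N (n + 1) with h | h
        · have hn : N ≤ n := by omega
          have hn1 : 1 ≤ n := le_trans (hN n hn).2 (le_refl _)
          have hnpos : (0 : ℝ) < n := by exact_mod_cast hn1
          have hSn : 0 < S n := hSpos n hn1
          have hr := (hN n hn).1
          have hy1 : c * S n / (n : ℝ) ≤ y (n + 1) := by
            rw [le_div_iff₀ hSn] at hr
            rw [div_le_iff₀ hnpos]
            linarith
          have : S n / (n : ℝ) ≤ S (n + 1) / ((n : ℝ) + 1) := by
            rw [hSsucc, div_le_div_iff₀ hnpos (by linarith)]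
            have h1 : S n ≤ c * S n := le_mul_of_one_le_left hSn.le hc1.le
            have h2 : c * S n / (n : ℝ) * (n : ℝ) = c * S n := by
              field_simp
            nlinarith [hy1, mul_le_mul_of_nonneg_right hy1 hnpos.le]
          calc S N / (N : ℝ) ≤ S n / (n : ℝ) := ih hn
            _ ≤ S (n + 1) / ((n + 1 : ℕ) : ℝ) := by push_cast; linarith
        · have : N = n + 1 := by omega
          simp [this]
    have hδ : 0 < S N / (N : ℝ) := by
      have h1 : 1 ≤ N := (hN N (le_refl N)).2
      exact div_pos (hSpos N h1) (by exact_mod_cast h1)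
    -- y (t+1) ≥ c * (S N / N) for all t ≥ N, contradicting y → 0
    have hlow : ∀ t : ℕ, N ≤ t → c * (S N / (N : ℝ)) ≤ y (t + 1) := by
      intro t ht
      have h1 : 1 ≤ t := le_trans (hN N (le_refl N)).2 ht
      have htpos : (0 : ℝ) < t := by exact_mod_cast h1
      have hr := (hN t ht).1
      have := key t ht
      calc c * (S N / (N : ℝ)) ≤ c * (S t / (t : ℝ)) := by
            exact mul_le_mul_of_nonneg_left this (by linarith)
        _ ≤ y (t + 1) := by
            have hSt : 0 < S t := hSpos t h1
            rw [le_div_iff₀ hSt] at hr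
            rw [mul_div_assoc', div_le_iff₀ htpos]
            linarith
    have hy0 : Tendsto (fun t : ℕ => y (t + 1)) atTop (𝓝 0) := by
      rw [← hY0]; exact hY.comp (tendsto_add_atTop_nat 1)
    have := hy0.eventually_lt_const (mul_pos (by linarith : (0:ℝ) < c) hδ)
    obtain ⟨t, ht1, ht2⟩ := (this.and (eventually_ge_atTop N)).exists
    exact absurd (hlow t ht2) (not_le.mpr ht1)
end

section
/- Fix $p \in (0,1]$, an integer $m \ge 1$, and an integer $s' \ge 1$. Let $(Z_t)_{t \ge s'}$ be a stochastic process on a probability space with filtration $(\mathcal{F}_t)_{t \ge s'}$, adapted, taking values in the positive integers, such that: $1 \le Z_{s'} \le 2m$ almost surely; $Z_t \le 2t$ almost surely for every $t$; for every $t > s'$, $Z_t - Z_{t-1} \in \{0,1\}$ almost surely and $\Pr[Z_t = Z_{t-1} + 1 \mid \mathcal{F}_{t-1}] = \frac{p\, Z_{t-1}}{2t-1}$ almost surely. Then for every positive integer $k$ and every $t \ge s'$, $\mathbb{E}[(Z_t)^{(k)}] \le (2m)^{(k)}\, 2^{pk/2} \left(\frac{t}{s'}\right)^{pk/2}$. 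-/
open MeasureTheory Filter

/-- The rising factorial `a^(k) = a (a+1) (a+2) ⋯ (a+k-1)` of a real number `a`. -/
noncomputable def risingFactorial (a : ℝ) (k : ℕ) : ℝ :=
  ∏ i ∈ Finset.range k, (a + (i : ℝ))

lemma rf_nonneg {a : ℝ} (ha : 0 ≤ a) (k : ℕ) : 0 ≤ risingFactorial a k :=
  Finset.prod_nonneg fun i _ => by positivity

lemma rf_mono {a b : ℝ} (ha : 0 ≤ a) (hab : a ≤ b) (k : ℕ) :
    risingFactorial a k ≤ risingFactorial b k := by
  refine Finset.prod_le_prod ?_ ?_ <;> intro i _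
  · positivity
  · linarith

lemma rf_succ_mul (a : ℝ) (k : ℕ) :
    a * risingFactorial (a + 1) k = risingFactorial a k * (a + k) := by
  have h1 : risingFactorial a (k + 1) = risingFactorial a k * (a + k) :=
    Finset.prod_range_succ _ _
  have h2 : risingFactorial a (k + 1) = a * risingFactorial (a + 1) k := by
    rw [risingFactorial, Finset.prod_range_succ']
    have : ∀ i ∈ Finset.range k, a + ((i:ℕ) + 1 : ℕ) = (a + 1) + (i : ℝ) := by
      intro i _; push_cast; ring
    rw [Finset.prod_congr rfl this]
    simp [risingFactorial, mul_comm]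
  rw [← h1, ← h2]

lemma log_ge_aux {z : ℝ} (hz : 0 < z) : z / (1 + z) ≤ Real.log (1 + z) := by
  have h1z : (0:ℝ) < 1 + z := by linarith
  have h2 : Real.exp (-(z / (1 + z))) ≥ 1 - z / (1 + z) := by
    have := Real.add_one_le_exp (-(z / (1 + z))); linarith
  have h3 : Real.exp (z / (1 + z)) ≤ 1 + z := by
    rw [← neg_neg (z / (1+z)), Real.exp_neg]
    rw [inv_le_comm₀ (Real.exp_pos _) h1z]
    calc (1 + z)⁻¹ = 1 - z/(1+z) := by field_simp; ring
    _ ≤ Real.exp (-(z/(1+z))) := h2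
  calc z / (1 + z) = Real.log (Real.exp (z / (1+z))) := (Real.log_exp _).symm
  _ ≤ Real.log (1 + z) := Real.log_le_log (Real.exp_pos _) h3

lemma key_ineq {b α : ℝ} (hb : 1 ≤ b) (hα : 0 < α) :
    1 + 2 * α / (b + 2) ≤ ((b + 2) / b) ^ α := by
  have hb0 : (0:ℝ) < b := by linarith
  have hr : (0:ℝ) < (b + 2) / b := by positivity
  have hlog : 2 / (b + 2) ≤ Real.log ((b + 2) / b) := by
    have hz : (0:ℝ) < 2 / b := by positivity
    have hmain := log_ge_aux hz
    have he : 1 + 2 / b = (b + 2) / b := by field_simp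
    calc 2 / (b + 2) = (2 / b) / (1 + 2 / b) := by
          rw [he]; field_simp
    _ ≤ Real.log (1 + 2 / b) := hmain
    _ = Real.log ((b + 2) / b) := by rw [he]
  rw [Real.rpow_def_of_pos hr]
  calc 1 + 2 * α / (b + 2) = α * (2 / (b + 2)) + 1 := by ring
  _ ≤ α * Real.log ((b+2)/b) + 1 := by nlinarith
  _ ≤ Real.exp (α * Real.log ((b+2)/b)) := Real.add_one_le_exp _
  _ = Real.exp (Real.log ((b+2)/b) * α) := by rw [mul_comm]

set_option maxHeartbeats 1000000 in
/-- Lemma 1 (degree moment bound for GPA): if `Z` is an adapted positive-integer-valued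
process with `1 ≤ Z s' ≤ 2 m`, `Z t ≤ 2 t`, increments in `{0,1}`, and conditional jump
probability `p * Z (t-1) / (2 t - 1)`, then
`E[(Z t)^(k)] ≤ (2 m)^(k) * 2^(p k / 2) * (t / s')^(p k / 2)`. -/
theorem stmt_5 (p : ℝ) (hp0 : 0 < p) (hp1 : p ≤ 1) (m : ℕ) (hm : 1 ≤ m)
    (s' : ℕ) (hs' : 1 ≤ s')
    (Ω : Type*) (mΩ : MeasurableSpace Ω) (μ : Measure Ω) (hprob : IsProbabilityMeasure μ)
    (ℱ : Filtration ℕ mΩ)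
    (Z : ℕ → Ω → ℕ)
    (hadapted : ∀ t : ℕ, s' ≤ t → Measurable[ℱ t] (Z t))
    (hpos : ∀ t : ℕ, s' ≤ t → ∀ᵐ ω ∂μ, 1 ≤ Z t ω)
    (hinit : ∀ᵐ ω ∂μ, 1 ≤ Z s' ω ∧ Z s' ω ≤ 2 * m)
    (hbdd : ∀ t : ℕ, s' ≤ t → ∀ᵐ ω ∂μ, Z t ω ≤ 2 * t)
    (hstep : ∀ t : ℕ, s' < t → ∀ᵐ ω ∂μ,
      Z t ω = Z (t - 1) ω ∨ Z t ω = Z (t - 1) ω + 1)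
    (hcond : ∀ t : ℕ, s' < t →
      μ[Set.indicator {ω | Z t ω = Z (t - 1) ω + 1} (fun _ => (1 : ℝ)) | ℱ (t - 1)]
        =ᵐ[μ] fun ω => p * (Z (t - 1) ω : ℝ) / (2 * (t : ℝ) - 1)) :
    ∀ k : ℕ, 1 ≤ k → ∀ t : ℕ, s' ≤ t →
      (∫ ω, risingFactorial (Z t ω : ℝ) k ∂μ) ≤
        risingFactorial (2 * (m : ℝ)) k * (2 : ℝ) ^ (p * (k : ℝ) / 2) *
          ((t : ℝ) / (s' : ℝ)) ^ (p * (k : ℝ) / 2) := by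
  intro k hk t ht
  set α : ℝ := p * (k : ℝ) / 2 with hα_def
  have hk1 : (1:ℝ) ≤ (k:ℝ) := by exact_mod_cast hk
  have hα : 0 < α := by
    have : (0:ℝ) < (k:ℝ) := by linarith
    positivity
  have hs1 : (1:ℝ) ≤ (s':ℝ) := by exact_mod_cast hs'
  -- measurability
  have measZ : ∀ u : ℕ, s' ≤ u → Measurable (Z u) :=
    fun u hu => (hadapted u hu).mono (ℱ.le u) le_rfl
  have measF : ∀ (F : ℕ → ℝ) (u : ℕ), s' ≤ u → Measurable fun ω => F (Z u ω) :=
    fun F u hu => measurable_from_top.comp (measZ u hu)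
  -- integrability of bounded-by-const functions of Z u
  have hint : ∀ (F : ℕ → ℝ) (u : ℕ), s' ≤ u → ∀ (C : ℝ),
      (∀ᵐ ω ∂μ, |F (Z u ω)| ≤ C) → Integrable (fun ω => F (Z u ω)) μ := by
    intro F u hu C hb
    exact Integrable.mono' (integrable_const C) ((measF F u hu).aestronglyMeasurable)
      (by simpa [Real.norm_eq_abs] using hb)
  have habs : ∀ (u : ℕ) (n : ℕ), n ≤ 2 * u →
      |risingFactorial (n : ℝ) k| ≤ risingFactorial (2 * (u:ℝ)) k := by
    intro u n hn
    rw [abs_of_nonneg (rf_nonneg (Nat.cast_nonneg n) k)]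
    exact rf_mono (Nat.cast_nonneg n) (by exact_mod_cast hn) k
  have hint_rf : ∀ u : ℕ, s' ≤ u →
      Integrable (fun ω => risingFactorial (Z u ω : ℝ) k) μ := by
    intro u hu
    refine hint (fun n => risingFactorial (n : ℝ) k) u hu (risingFactorial (2*(u:ℝ)) k) ?_
    filter_upwards [hbdd u hu] with ω hω using habs u _ hω
  -- the main induction
  have main : ∀ u : ℕ, s' ≤ u →
      (∫ ω, risingFactorial (Z u ω : ℝ) k ∂μ) ≤
        risingFactorial (2 * (m:ℝ)) k * ((2*(u:ℝ) - 1) / (2*(s':ℝ) - 1)) ^ α := by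
    intro u hu
    induction u, hu using Nat.le_induction with
    | base =>
      have h1 : (∫ ω, risingFactorial (Z s' ω : ℝ) k ∂μ) ≤
          ∫ _ω, risingFactorial (2 * (m:ℝ)) k ∂μ := by
        refine integral_mono_ae (hint_rf s' le_rfl) (integrable_const _) ?_
        filter_upwards [hinit] with ω hω
        refine rf_mono (Nat.cast_nonneg _) ?_ k
        have := hω.2
        push_cast
        exact_mod_cast this
      have h2 : (∫ _ω, risingFactorial (2 * (m:ℝ)) k ∂μ) = risingFactorial (2 * (m:ℝ)) k := by
        simp [measure_univ]
      have h3 : ((2*(s':ℝ) - 1) / (2*(s':ℝ) - 1)) ^ α = 1 := by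
        rw [div_self (by linarith), Real.one_rpow]
      rw [h3, mul_one]
      linarith [h1, h2.le, h2.ge]
    | succ u hu ih =>
      -- notation
      set A : Set Ω := {ω | Z (u+1) ω = Z u ω + 1} with hA_def
      have hA_meas : MeasurableSet A := by
        apply measurableSet_eq_fun (measZ (u+1) (by omega))
        exact (measZ u hu).add measurable_const
      set ind : Ω → ℝ := Set.indicator A (fun _ => (1 : ℝ)) with hind_def
      set g : Ω → ℝ := fun ω => risingFactorial (Z u ω : ℝ) k with hg_def
      set h : Ω → ℝ := fun ω =>
        risingFactorial ((Z u ω : ℝ) + 1) k - risingFactorial (Z u ω : ℝ) k with hh_def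
      have hg_int : Integrable g μ := hint_rf u hu
      have hh_int : Integrable h μ := by
        refine hint (fun n => risingFactorial ((n:ℝ)+1) k - risingFactorial (n:ℝ) k) u hu
          (2 * risingFactorial (2*(u:ℝ)+1) k) ?_
        filter_upwards [hbdd u hu] with ω hω
        have h1 : (0:ℝ) ≤ (Z u ω : ℝ) := Nat.cast_nonneg _
        have h2 : (Z u ω : ℝ) + 1 ≤ 2*(u:ℝ)+1 := by
          have : (Z u ω : ℝ) ≤ 2*(u:ℝ) := by exact_mod_cast hω
          linarith
        have h3 := rf_mono (by linarith : (0:ℝ) ≤ (Z u ω:ℝ)+1) h2 k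
        have h4 := rf_nonneg h1 k
        have h5 := rf_mono h1 (by linarith : (Z u ω : ℝ) ≤ 2*(u:ℝ)+1) k
        have h6 : (0:ℝ) ≤ risingFactorial (2*(u:ℝ)+1) k := rf_nonneg (by positivity) k
        have h7 : (0:ℝ) ≤ risingFactorial ((Z u ω : ℝ)+1) k := rf_nonneg (by linarith) k
        rw [abs_le]; constructor <;> linarith
      have hind_int : Integrable ind μ := (integrable_const (1:ℝ)).indicator hA_meas
      have hhind_int : Integrable (h * ind) μ := by
        refine Integrable.mono' hh_int.abs ((hh_int.aestronglyMeasurable.mul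
          hind_int.aestronglyMeasurable)) ?_
        filter_upwards with ω
        simp only [Pi.mul_apply, Real.norm_eq_abs, Pi.abs_apply, abs_mul]
        have : |ind ω| ≤ 1 := by
          rw [hind_def]
          by_cases hω : ω ∈ A <;>
            simp [Set.indicator_of_mem, Set.indicator_of_notMem, hω]
        nlinarith [abs_nonneg (h ω), abs_nonneg (ind ω)]
      -- pointwise decomposition
      have hdecomp : ∀ᵐ ω ∂μ, risingFactorial (Z (u+1) ω : ℝ) k = g ω + (h * ind) ω := by
        filter_upwards [hstep (u+1) (by omega)] with ω hω
        simp only [Nat.add_sub_cancel] at hω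
        simp only [Pi.mul_apply, hg_def, hh_def, hind_def]
        by_cases hA : ω ∈ A
        · have hZ : Z (u+1) ω = Z u ω + 1 := hA
          rw [Set.indicator_of_mem hA, hZ]
          push_cast; ring
        · rcases hω with hZ | hZ
          · rw [Set.indicator_of_notMem hA, hZ]; ring
          · exact absurd hZ hA
      -- integral of the jump part via conditional expectation
      have hsm : StronglyMeasurable[ℱ u] h := by
        have : Measurable[ℱ u] h :=
          (measurable_from_top
            (f := fun n : ℕ => risingFactorial ((n:ℝ)+1) k - risingFactorial (n:ℝ) k)).comp
            (hadapted u hu)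
        exact this.stronglyMeasurable
      have hpull : μ[h * ind | ℱ u] =ᵐ[μ] h * μ[ind | ℱ u] :=
        condExp_mul_of_stronglyMeasurable_left hsm hhind_int hind_int
      have hcond' : μ[ind | ℱ u] =ᵐ[μ] fun ω => p * (Z u ω : ℝ) / (2 * ((u:ℝ)+1) - 1) := by
        have := hcond (u+1) (by omega)
        simp only [Nat.add_sub_cancel] at this
        convert this using 3
        push_cast; ring
      have hjump : (∫ ω, (h * ind) ω ∂μ)
          = ∫ ω, h ω * (p * (Z u ω : ℝ) / (2 * ((u:ℝ)+1) - 1)) ∂μ := by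
        rw [← integral_condExp (ℱ.le u) (f := h * ind)]
        refine integral_congr_ae (hpull.trans ?_)
        filter_upwards [hcond'] with ω hω
        simp only [Pi.mul_apply, hω]
      -- rewrite jump integrand using the rising factorial identity
      have hjump2 : (∫ ω, h ω * (p * (Z u ω : ℝ) / (2 * ((u:ℝ)+1) - 1)) ∂μ)
          = (p * (k:ℝ) / (2 * ((u:ℝ)+1) - 1)) * ∫ ω, g ω ∂μ := by
        rw [← integral_const_mul]
        refine integral_congr_ae ?_
        filter_upwards [hpos u hu] with ω hω
        have ha : (1:ℝ) ≤ (Z u ω : ℝ) := by exact_mod_cast hω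
        have hid := rf_succ_mul ((Z u ω : ℝ)) k
        have hkey : h ω * (Z u ω : ℝ) = g ω * (k:ℝ) := by
          simp only [hh_def, hg_def]
          nlinarith [hid]
        have e1 : h ω * (p * (Z u ω : ℝ) / (2 * ((u:ℝ)+1) - 1))
            = (p / (2 * ((u:ℝ)+1) - 1)) * (h ω * (Z u ω : ℝ)) := by ring
        rw [e1, hkey]; ring
      -- combine
      have hsplit : (∫ ω, risingFactorial (Z (u+1) ω : ℝ) k ∂μ)
          = (∫ ω, g ω ∂μ) + ∫ ω, (h * ind) ω ∂μ := by
        rw [← integral_add hg_int hhind_int]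
        exact integral_congr_ae hdecomp
      have hg_nonneg : 0 ≤ ∫ ω, g ω ∂μ := by
        refine integral_nonneg ?_
        intro ω; exact rf_nonneg (Nat.cast_nonneg _) k
      have htotal : (∫ ω, risingFactorial (Z (u+1) ω : ℝ) k ∂μ)
          = (1 + p * (k:ℝ) / (2 * ((u:ℝ)+1) - 1)) * ∫ ω, g ω ∂μ := by
        rw [hsplit, hjump, hjump2]; ring
      -- bound via key inequality
      have hu1 : (1:ℝ) ≤ (u:ℝ) := by
        have : 1 ≤ u := le_trans hs' hu
        exact_mod_cast this
      have hb : (1:ℝ) ≤ 2*(u:ℝ) - 1 := by linarith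
      have hkey := key_ineq (b := 2*(u:ℝ)-1) (α := α) hb hα
      have hratio : 1 + p * (k:ℝ) / (2 * ((u:ℝ)+1) - 1)
          ≤ ((2*(u:ℝ)+1) / (2*(u:ℝ)-1)) ^ α := by
        have e1 : (2*(u:ℝ)-1) + 2 = 2*((u:ℝ)+1) - 1 := by ring
        have e2 : 2 * α = p * (k:ℝ) := by rw [hα_def]; ring
        calc 1 + p * (k:ℝ) / (2 * ((u:ℝ)+1) - 1)
            = 1 + 2 * α / ((2*(u:ℝ)-1) + 2) := by rw [e1, e2]
          _ ≤ (((2*(u:ℝ)-1) + 2) / (2*(u:ℝ)-1)) ^ α := hkey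
          _ = ((2*(u:ℝ)+1) / (2*(u:ℝ)-1)) ^ α := by
              congr 1
              ring
      have hrf2m : 0 ≤ risingFactorial (2*(m:ℝ)) k :=
        rf_nonneg (by positivity) k
      have hcomb : ((2*(u:ℝ)+1) / (2*(u:ℝ)-1)) ^ α * ((2*(u:ℝ) - 1) / (2*(s':ℝ) - 1)) ^ α
          = ((2*((u:ℝ)+1) - 1) / (2*(s':ℝ) - 1)) ^ α := by
        rw [← Real.mul_rpow (div_nonneg (by linarith) (by linarith))
          (div_nonneg (by linarith) (by linarith))]
        congr 1
        have h1 : (2*(u:ℝ)-1) ≠ 0 := by linarith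
        field_simp
        ring
      have hratio_pos : 0 ≤ 1 + p * (k:ℝ) / (2 * ((u:ℝ)+1) - 1) := by
        have hD : (0:ℝ) < 2 * ((u:ℝ)+1) - 1 := by linarith
        have : 0 ≤ p * (k:ℝ) / (2 * ((u:ℝ)+1) - 1) :=
          div_nonneg (by nlinarith) hD.le
        linarith
      calc (∫ ω, risingFactorial (Z (u+1) ω : ℝ) k ∂μ)
          = (1 + p * (k:ℝ) / (2 * ((u:ℝ)+1) - 1)) * ∫ ω, g ω ∂μ := htotal
        _ ≤ ((2*(u:ℝ)+1) / (2*(u:ℝ)-1)) ^ α *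
            (risingFactorial (2 * (m:ℝ)) k * ((2*(u:ℝ) - 1) / (2*(s':ℝ) - 1)) ^ α) := by
            have h1 : (1 + p * (k:ℝ) / (2 * ((u:ℝ)+1) - 1)) * (∫ ω, g ω ∂μ)
                ≤ (1 + p * (k:ℝ) / (2 * ((u:ℝ)+1) - 1)) *
                  (risingFactorial (2 * (m:ℝ)) k * ((2*(u:ℝ) - 1) / (2*(s':ℝ) - 1)) ^ α) :=
              mul_le_mul_of_nonneg_left ih hratio_pos
            have h2pos : 0 ≤ risingFactorial (2 * (m:ℝ)) k *
                ((2*(u:ℝ) - 1) / (2*(s':ℝ) - 1)) ^ α := by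
              exact mul_nonneg hrf2m
                (Real.rpow_nonneg (div_nonneg (by linarith) (by linarith)) α)
            nlinarith [mul_le_mul_of_nonneg_right hratio h2pos]
        _ = risingFactorial (2 * (m:ℝ)) k *
            (((2*(u:ℝ)+1) / (2*(u:ℝ)-1)) ^ α * ((2*(u:ℝ) - 1) / (2*(s':ℝ) - 1)) ^ α) := by
            ring
        _ = risingFactorial (2 * (m:ℝ)) k *
            ((2*((u:ℝ)+1) - 1) / (2*(s':ℝ) - 1)) ^ α := by rw [hcomb]
        _ = risingFactorial (2 * (m:ℝ)) k *
            ((2*(((u:ℕ)+1 : ℕ):ℝ) - 1) / (2*(s':ℝ) - 1)) ^ α := by push_cast; ring_nf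
  -- finish: compare the telescoped bound with the stated bound
  have hfin := main t ht
  have ht1 : (1:ℝ) ≤ (t:ℝ) := le_trans hs1 (by exact_mod_cast ht)
  have hbase_le : (2*(t:ℝ) - 1) / (2*(s':ℝ) - 1) ≤ 2 * ((t:ℝ) / (s':ℝ)) := by
    rw [div_le_iff₀ (by linarith : (0:ℝ) < 2*(s':ℝ)-1)]
    have hs0 : (0:ℝ) < (s':ℝ) := by linarith
    have e : 2 * ((t:ℝ) / (s':ℝ)) * (2*(s':ℝ)-1) = (2*(t:ℝ)) * (2*(s':ℝ)-1) / (s':ℝ) := by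
      field_simp
    rw [e, le_div_iff₀ hs0]
    nlinarith
  have hrpow : ((2*(t:ℝ) - 1) / (2*(s':ℝ) - 1)) ^ α ≤ (2 * ((t:ℝ) / (s':ℝ))) ^ α :=
    Real.rpow_le_rpow (div_nonneg (by linarith) (by linarith)) hbase_le hα.le
  have hsplit2 : (2 * ((t:ℝ) / (s':ℝ))) ^ α = (2:ℝ) ^ α * ((t:ℝ) / (s':ℝ)) ^ α :=
    Real.mul_rpow (by norm_num) (by positivity)
  have hrf2m : 0 ≤ risingFactorial (2*(m:ℝ)) k := rf_nonneg (by positivity) k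
  calc (∫ ω, risingFactorial (Z t ω : ℝ) k ∂μ)
      ≤ risingFactorial (2 * (m:ℝ)) k * ((2*(t:ℝ) - 1) / (2*(s':ℝ) - 1)) ^ α := hfin
    _ ≤ risingFactorial (2 * (m:ℝ)) k * ((2:ℝ) ^ α * ((t:ℝ) / (s':ℝ)) ^ α) := by
        rw [← hsplit2]
        exact mul_le_mul_of_nonneg_left hrpow hrf2m
    _ = risingFactorial (2 * (m:ℝ)) k * (2:ℝ) ^ α * ((t:ℝ) / (s':ℝ)) ^ α := by ring
end

section
/- Fix $p \in (0,1]$ and an integer $t \ge 2$. Let $Z$ be a random variable taking values in the positive integers with $Z \le 2(t-1)$ almost surely, and let $Y$ be a $\{0,1\}$-valued random variable with $\Pr[Y = 1 \mid Z] = \frac{p\,Z}{2t-1}$ almost surely. Then for every positive integer $k$, $\mathbb{E}[(Z+Y)^{(k)}] = \mathbb{E}[Z^{(k)}]\left(1 + \frac{pk}{2t-1}\right)$. -/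
open MeasureTheory

lemma rf_base (n k : ℕ) (hk : 1 ≤ k) :
    risingFactorial (n : ℝ) k = (n : ℝ) * ∏ i ∈ Finset.range (k - 1), ((n : ℝ) + 1 + i) := by
  obtain ⟨m, rfl⟩ : ∃ m, k = m + 1 := ⟨k - 1, (Nat.succ_pred_eq_of_pos hk).symm⟩
  simp only [risingFactorial, Nat.add_sub_cancel]
  rw [Finset.prod_range_succ']
  simp only [Nat.cast_zero, add_zero]
  rw [mul_comm]
  congr 1
  refine Finset.prod_congr rfl fun i _ => ?_
  push_cast
  ring

lemma rf_succ (n k : ℕ) (hk : 1 ≤ k) :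
    risingFactorial ((n + 1 : ℕ) : ℝ) k =
      risingFactorial (n : ℝ) k + (k : ℝ) * ∏ i ∈ Finset.range (k - 1), ((n : ℝ) + 1 + i) := by
  obtain ⟨m, rfl⟩ : ∃ m, k = m + 1 := ⟨k - 1, (Nat.succ_pred_eq_of_pos hk).symm⟩
  simp only [Nat.add_sub_cancel]
  rw [rf_base n (m + 1) (Nat.le_add_left 1 m)]
  simp only [Nat.add_sub_cancel, risingFactorial]
  rw [Finset.prod_range_succ]
  have hP : (∏ i ∈ Finset.range m, (((n + 1 : ℕ) : ℝ) + i)) =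
      ∏ i ∈ Finset.range m, ((n : ℝ) + 1 + i) := by
    refine Finset.prod_congr rfl fun i _ => ?_
    push_cast; ring
  rw [hP]
  push_cast
  ring

lemma integrable_comp_nat {Ω : Type*} {mΩ : MeasurableSpace Ω} {μ : Measure Ω}
    [IsFiniteMeasure μ] {X : Ω → ℕ} (hX : Measurable X) (B : ℕ)
    (hB : ∀ᵐ ω ∂μ, X ω ≤ B) (G : ℕ → ℝ) :
    Integrable (fun ω => G (X ω)) μ := by
  have hmeas : Measurable fun ω => G (X ω) := measurable_from_top.comp hX
  refine Integrable.mono' (integrable_const (∑ n ∈ Finset.range (B + 1), |G n|))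
    hmeas.aestronglyMeasurable ?_
  filter_upwards [hB] with ω hω
  calc ‖G (X ω)‖ = |G (X ω)| := rfl
    _ ≤ ∑ n ∈ Finset.range (B + 1), |G n| :=
        Finset.single_le_sum (fun i _ => abs_nonneg (G i))
          (Finset.mem_range.mpr (Nat.lt_succ_of_le hω))

/-- One-step moment identity: if `Z` is a positive-integer random variable with
`Z ≤ 2 (t - 1)` a.s. and `Y ∈ {0,1}` with `P[Y = 1 ∣ Z] = p Z / (2 t - 1)`, then
`E[(Z + Y)^(k)] = E[Z^(k)] * (1 + p k / (2 t - 1))`. -/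
theorem stmt_6 (p : ℝ) (hp0 : 0 < p) (hp1 : p ≤ 1) (t : ℕ) (ht : 2 ≤ t)
    (Ω : Type*) (mΩ : MeasurableSpace Ω) (μ : Measure Ω) (hprob : IsProbabilityMeasure μ)
    (Z Y : Ω → ℕ) (hZmeas : Measurable Z) (hYmeas : Measurable Y)
    (hZpos : ∀ᵐ ω ∂μ, 1 ≤ Z ω) (hZbdd : ∀ᵐ ω ∂μ, Z ω ≤ 2 * (t - 1))
    (hY01 : ∀ᵐ ω ∂μ, Y ω = 0 ∨ Y ω = 1)
    (hcond : μ[Set.indicator {ω | Y ω = 1} (fun _ => (1 : ℝ)) |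
        MeasurableSpace.comap Z inferInstance]
      =ᵐ[μ] fun ω => p * (Z ω : ℝ) / (2 * (t : ℝ) - 1)) :
    ∀ k : ℕ, 1 ≤ k →
      (∫ ω, risingFactorial ((Z ω + Y ω : ℕ) : ℝ) k ∂μ) =
        (∫ ω, risingFactorial ((Z ω : ℕ) : ℝ) k ∂μ) *
          (1 + p * (k : ℝ) / (2 * (t : ℝ) - 1)) := by
  intro k hk
  have hm : MeasurableSpace.comap Z inferInstance ≤ mΩ := hZmeas.comap_le
  haveI : SigmaFinite (μ.trim hm) := by
    haveI : IsFiniteMeasure (μ.trim hm) := isFiniteMeasure_trim hm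
    infer_instance
  set G : ℕ → ℝ := fun n => (k : ℝ) * ∏ i ∈ Finset.range (k - 1), ((n : ℝ) + 1 + i) with hG_def
  set I : Ω → ℝ := Set.indicator {ω | Y ω = 1} (fun _ => (1 : ℝ)) with hI_def
  have hYset : MeasurableSet {ω | Y ω = 1} := hYmeas (measurableSet_singleton 1)
  have intRZ : Integrable (fun ω => risingFactorial ((Z ω : ℕ) : ℝ) k) μ :=
    integrable_comp_nat hZmeas (2 * (t - 1)) hZbdd (fun n => risingFactorial (n : ℝ) k)
  have intRZY : Integrable (fun ω => risingFactorial ((Z ω + Y ω : ℕ) : ℝ) k) μ := by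
    have hXY : ∀ᵐ ω ∂μ, Z ω + Y ω ≤ 2 * (t - 1) + 1 := by
      filter_upwards [hZbdd, hY01] with ω h1 h2
      rcases h2 with h | h <;> omega
    exact integrable_comp_nat (hZmeas.add hYmeas) (2 * (t - 1) + 1) hXY
      (fun n => risingFactorial (n : ℝ) k)
  have intGZ : Integrable (fun ω => G (Z ω)) μ :=
    integrable_comp_nat hZmeas (2 * (t - 1)) hZbdd G
  have intI : Integrable I μ := (integrable_const (1 : ℝ)).indicator hYset
  have measGZ : Measurable fun ω => G (Z ω) :=
    (measurable_from_top : Measurable G).comp hZmeas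
  have measI : Measurable I := measurable_const.indicator hYset
  have intGI : Integrable ((fun ω => G (Z ω)) * I) μ := by
    refine Integrable.mono' intGZ.abs ((measGZ.mul measI).aestronglyMeasurable) ?_
    refine Filter.Eventually.of_forall fun ω => ?_
    simp only [Pi.mul_apply, norm_mul, Real.norm_eq_abs]
    have hIle : |I ω| ≤ 1 := by
      simp only [hI_def, Set.indicator]
      split <;> simp
    calc |G (Z ω)| * |I ω| ≤ |G (Z ω)| * 1 :=
          mul_le_mul_of_nonneg_left hIle (abs_nonneg _)
      _ = |G (Z ω)| := mul_one _
  have hZm : Measurable[MeasurableSpace.comap Z inferInstance] Z := fun s hs => ⟨s, hs, rfl⟩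
  have hGsm : StronglyMeasurable[MeasurableSpace.comap Z inferInstance] fun ω => G (Z ω) :=
    ((measurable_from_top : Measurable G).comp hZm).stronglyMeasurable
  have hpull : μ[(fun ω => G (Z ω)) * I | MeasurableSpace.comap Z inferInstance]
      =ᵐ[μ] (fun ω => G (Z ω)) * μ[I | MeasurableSpace.comap Z inferInstance] :=
    condExp_mul_of_stronglyMeasurable_left hGsm intGI intI
  have intGI' : Integrable (fun ω => G (Z ω) * I ω) μ := intGI
  have key : ∫ ω, G (Z ω) * I ω ∂μ
      = ∫ ω, G (Z ω) * (p * (Z ω : ℝ) / (2 * (t : ℝ) - 1)) ∂μ := by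
    calc ∫ ω, G (Z ω) * I ω ∂μ
        = ∫ ω, ((fun ω => G (Z ω)) * I) ω ∂μ := rfl
      _ = ∫ ω, (μ[(fun ω => G (Z ω)) * I | MeasurableSpace.comap Z inferInstance]) ω ∂μ :=
          (integral_condExp hm).symm
      _ = ∫ ω, G (Z ω) * (p * (Z ω : ℝ) / (2 * (t : ℝ) - 1)) ∂μ := by
          refine integral_congr_ae ?_
          filter_upwards [hpull, hcond] with ω h1 h2
          simp only [Pi.mul_apply] at h1 ⊢
          rw [h1, h2]
  have halg : ∀ n : ℕ, G n * (p * (n : ℝ) / (2 * (t : ℝ) - 1))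
      = p * (k : ℝ) / (2 * (t : ℝ) - 1) * risingFactorial (n : ℝ) k := by
    intro n
    rw [rf_base n k hk, hG_def]
    ring
  have hdecomp : ∀ᵐ ω ∂μ,
      risingFactorial ((Z ω + Y ω : ℕ) : ℝ) k
        = risingFactorial ((Z ω : ℕ) : ℝ) k + G (Z ω) * I ω := by
    filter_upwards [hY01] with ω hω
    rcases hω with h | h
    · have : I ω = 0 := by
        simp [hI_def, Set.indicator, h]
      rw [h, this, add_zero, mul_zero, add_zero]
    · have : I ω = 1 := by
        simp [hI_def, Set.indicator, h]
      rw [h, this, mul_one]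
      exact rf_succ (Z ω) k hk
  have step1 : (∫ ω, risingFactorial ((Z ω + Y ω : ℕ) : ℝ) k ∂μ)
      = (∫ ω, risingFactorial ((Z ω : ℕ) : ℝ) k ∂μ) + ∫ ω, G (Z ω) * I ω ∂μ := by
    rw [← integral_add intRZ intGI']
    exact integral_congr_ae hdecomp
  rw [step1, key]
  have step2 : ∫ ω, G (Z ω) * (p * (Z ω : ℝ) / (2 * (t : ℝ) - 1)) ∂μ
      = p * (k : ℝ) / (2 * (t : ℝ) - 1) * ∫ ω, risingFactorial ((Z ω : ℕ) : ℝ) k ∂μ := by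
    rw [← integral_const_mul]
    exact integral_congr_ae (Filter.Eventually.of_forall fun ω => halg (Z ω))
  rw [step2]
  ring
end

section
/- Fix $p \in (0,1]$ and a positive integer $l$. For each integer $t$, suppose given: an integer $t_0 = t_0(t)$ with $1 \le t_0 < t$; positive integers $d_1,\dots,d_l$ (depending on $t$) with $d = \sum_{i=1}^l d_i$; nonnegative integers $r_1,\dots,r_l$ (depending on $t$) with $r = \sum_{i=1}^l r_i$; and a process $(D_1(\tau),\dots,D_l(\tau))_{\tau = t_0,\dots,t}$ adapted to a filtration $(\mathcal{F}_\tau)$, taking positive-integer values, such that $D_i(t_0) = d_i$ almost surely, at each step $\tau > t_0$ at most one coordinate changes and it increases by exactly $1$, and for each $i$, $\Pr[D_i(\tau) = D_i(\tau-1) + 1 \mid \mathcal{F}_{\tau-1}] = \frac{p\, D_i(\tau-1)}{2\tau - 1}$ almost surely. Assume $d = o(t^{1/2})$ and $r = o(t^{2/3})$ as $t \to \infty$. Then for all sufficiently large $t$, $\Pr[\,D_i(t) = d_i + r_i \text{ for all } i = 1,\dots,l\,] \le \left(\prod_{i=1}^{l} \binom{r_i + d_i - 1}{d_i - 1}\right)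 \left(\frac{t_0+1}{t}\right)^{pd/2} \exp\left\{2 + t_0 - \frac{pd}{2} + \frac{3pr}{t^{p/2}}\right\}$. -/
open MeasureTheory Filter Asymptotics Finset

set_option linter.unusedSectionVars false
set_option linter.unusedVariables false

namespace Stmt8Aux

variable (p dR : ℝ) (n : ℕ)
noncomputable def rho (s : ℕ) : ℝ := max (1 - p * dR / (2 * s - 1)) (p / (2 * s - 1))
noncomputable def AA (τ : ℕ) : ℝ := ∏ s ∈ Ioc n τ, rho p dR s
noncomputable def ww (j s : ℕ) : ℝ := p * j / ((2 * s - 1) * rho p dR s)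
noncomputable def mq (j τ : ℕ) : ℝ := ∏ s ∈ Ioc n τ, max 0 (1 - ww p dR j s)
noncomputable def FF (j τ : ℕ) : ℝ := AA p dR n τ * ∏ i ∈ Icc 1 j, (1 - mq p dR n i τ)
variable {p dR : ℝ} {n : ℕ} (hp0 : 0 < p) (hp1 : p ≤ 1) (hd0 : 0 ≤ dR)

lemma two_s_pos {s : ℕ} (hs : 1 ≤ s) : (0:ℝ) < 2 * s - 1 := by
  have : (1:ℝ) ≤ s := by exact_mod_cast hs
  linarith

include hp0 in
lemma rho_pos {s : ℕ} (hs : 1 ≤ s) : 0 < rho p dR s :=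
  lt_of_lt_of_le (div_pos hp0 (two_s_pos hs)) (le_max_right _ _)

include hp0 hp1 hd0 in
lemma rho_le_one {s : ℕ} (hs : 1 ≤ s) : rho p dR s ≤ 1 := by
  have h2 := two_s_pos hs
  have hs1 : (1:ℝ) ≤ s := by exact_mod_cast hs
  apply max_le
  · have : 0 ≤ p * dR / (2 * s - 1) := div_nonneg (mul_nonneg hp0.le hd0) h2.le
    linarith
  · rw [div_le_one h2]; linarith

include hp0 in
lemma AA_pos {τ : ℕ} (hn : 1 ≤ n) : 0 < AA p dR n τ := by
  apply Finset.prod_pos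
  intro s hs
  exact rho_pos hp0 (le_trans hn (mem_Ioc.1 hs).1.le)

lemma AA_succ {τ : ℕ} (h : n ≤ τ) : AA p dR n (τ + 1) = AA p dR n τ * rho p dR (τ + 1) :=
  prod_Ioc_succ_top h _

include hp0 in
lemma ww_nonneg {j s : ℕ} (hs : 1 ≤ s) : 0 ≤ ww p dR j s :=
  div_nonneg (mul_nonneg hp0.le (Nat.cast_nonneg _))
    (mul_nonneg (two_s_pos hs).le (rho_pos hp0 hs).le)

lemma mq_nonneg {j τ : ℕ} : 0 ≤ mq p dR n j τ :=
  Finset.prod_nonneg fun _ _ => le_max_left _ _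

include hp0 in
lemma mq_le_one {j τ : ℕ} (hn : 1 ≤ n) : mq p dR n j τ ≤ 1 := by
  apply Finset.prod_le_one (fun _ _ => le_max_left _ _)
  intro s hs
  have hs1 : 1 ≤ s := le_trans hn (mem_Ioc.1 hs).1.le
  have := ww_nonneg hp0 (j := j) (dR := dR) hs1
  exact max_le (by norm_num) (by linarith)

lemma mq_succ {j τ : ℕ} (h : n ≤ τ) :
    mq p dR n j (τ + 1) = mq p dR n j τ * max 0 (1 - ww p dR j (τ + 1)) :=
  prod_Ioc_succ_top h _

include hp0 in
lemma mq_succ_le {j τ : ℕ} (h : n ≤ τ) :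
    mq p dR n j (τ + 1) ≤ mq p dR n j τ := by
  rw [mq_succ h]
  have h1 : max 0 (1 - ww p dR j (τ+1)) ≤ 1 := by
    have := ww_nonneg hp0 (j := j) (dR := dR) (s := τ+1) (by omega)
    exact max_le (by norm_num) (by linarith)
  calc mq p dR n j τ * max 0 (1 - ww p dR j (τ+1)) ≤ mq p dR n j τ * 1 :=
        mul_le_mul_of_nonneg_left h1 mq_nonneg
    _ = _ := mul_one _

include hp0 in
lemma FF_nonneg {j τ : ℕ} (hn : 1 ≤ n) : 0 ≤ FF p dR n j τ := by
  apply mul_nonneg (AA_pos hp0 hn).le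
  apply Finset.prod_nonneg
  intro i _
  have := mq_le_one hp0 (j := i) (τ := τ) (dR := dR) hn
  linarith

include hp0 in
lemma FF_le_AA {j τ : ℕ} (hn : 1 ≤ n) : FF p dR n j τ ≤ AA p dR n τ := by
  have h1 : ∏ i ∈ Icc 1 j, (1 - mq p dR n i τ) ≤ 1 := by
    apply Finset.prod_le_one
    · intro i _; have := mq_le_one hp0 (j := i) (τ := τ) (dR := dR) hn; linarith
    · intro i _; have := mq_nonneg (p := p) (n := n) (j := i) (τ := τ) (dR := dR); linarith
  calc FF p dR n j τ ≤ AA p dR n τ * 1 :=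
        mul_le_mul_of_nonneg_left h1 (AA_pos hp0 hn).le
    _ = _ := mul_one _

include hp0 hp1 hd0 in
lemma weight_le (hn : 1 ≤ n) (hpd : p * dR ≤ 2 * n + 1) {j τ : ℕ} (hj : 1 ≤ j)
    (hjn : n + j ≤ τ + 1) : p * j ≤ (2 * (τ:ℝ) + 1) * rho p dR (τ + 1) := by
  have hcast : (2 * ((τ+1:ℕ):ℝ) - 1) = 2 * (τ:ℝ) + 1 := by push_cast; ring
  have hnτ : n ≤ τ := by omega
  have h2 : (0:ℝ) < 2 * (τ:ℝ) + 1 := by positivity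
  rcases Nat.lt_or_ge j 2 with hj2 | hj2
  · have hj1 : j = 1 := by omega
    subst hj1
    have heq : (2 * (τ:ℝ) + 1) * (p / (2 * ((τ+1:ℕ):ℝ) - 1)) = p := by
      rw [hcast]; field_simp
    calc p * ((1:ℕ):ℝ) = p := by norm_num
      _ = (2 * (τ:ℝ) + 1) * (p / (2 * ((τ+1:ℕ):ℝ) - 1)) := heq.symm
      _ ≤ _ := mul_le_mul_of_nonneg_left (le_max_right _ _) h2.le
  · have hτ : n + 1 ≤ τ := by omega
    have hlow : 2 * (τ:ℝ) + 1 - p * dR ≤ (2 * (τ:ℝ) + 1) * rho p dR (τ + 1) := by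
      have heq : (2 * (τ:ℝ) + 1) * (1 - p * dR / (2 * ((τ+1:ℕ):ℝ) - 1))
          = 2 * (τ:ℝ) + 1 - p * dR := by
        rw [hcast]; field_simp
      rw [← heq]
      exact mul_le_mul_of_nonneg_left (le_max_left _ _) h2.le
    have hτR : (n:ℝ) + 1 ≤ (τ:ℝ) := by exact_mod_cast hτ
    have hnR : (0:ℝ) ≤ (n:ℝ) := Nat.cast_nonneg _
    have hjR : (2:ℝ) ≤ (j:ℝ) := by exact_mod_cast hj2
    have hjτ : (j:ℝ) + (n:ℝ) ≤ (τ:ℝ) + 1 := by exact_mod_cast (by omega : j + n ≤ τ + 1)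
    have : p * j ≤ 2 * (τ:ℝ) + 1 - p * dR := by nlinarith
    linarith

lemma FF_zero (τ : ℕ) : FF p dR n 0 τ = AA p dR n τ := by
  rw [FF, Finset.Icc_eq_empty (by omega), Finset.prod_empty, mul_one]

lemma FF_succ_j (J τ : ℕ) :
    FF p dR n (J+1) τ = AA p dR n τ * ((∏ i ∈ Icc 1 J, (1 - mq p dR n i τ)) *
      (1 - mq p dR n (J+1) τ)) := by
  rw [FF, prod_Icc_succ_top (by omega)]

include hp0 in
lemma REQ0 {τ : ℕ} (hn : 1 ≤ n) (hτ : n ≤ τ) :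
    max 0 (1 - p * dR / (2 * (τ:ℝ) + 1)) * FF p dR n 0 τ ≤ FF p dR n 0 (τ+1) := by
  rw [FF_zero, FF_zero, AA_succ hτ]
  rw [mul_comm (AA p dR n τ)]
  apply mul_le_mul_of_nonneg_right _ (AA_pos hp0 hn).le
  apply max_le (rho_pos hp0 (by omega : 1 ≤ τ + 1)).le
  have hcast : (2 * ((τ+1:ℕ):ℝ) - 1) = 2 * (τ:ℝ) + 1 := by push_cast; ring
  rw [rho, hcast]
  exact le_max_left _ _

include hp0 hp1 hd0 in
lemma REQS (hn : 1 ≤ n) (hpd : p * dR ≤ 2 * n + 1) {J τ : ℕ} (hτ : n ≤ τ)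
    (hjn : n + (J + 1) ≤ τ + 1) :
    p * ((J:ℝ)+1) / (2 * (τ:ℝ) + 1) * FF p dR n J τ
      + max 0 (1 - p * (dR + ((J:ℝ)+1)) / (2 * (τ:ℝ) + 1)) * FF p dR n (J+1) τ
      ≤ FF p dR n (J+1) (τ+1) := by
  have hσ : (0:ℝ) < 2 * (τ:ℝ) + 1 := by positivity
  have hρ : 0 < rho p dR (τ+1) := rho_pos hp0 (by omega)
  have hcastJ : ((J+1:ℕ):ℝ) = (J:ℝ) + 1 := by push_cast; ring
  set M' : ℝ := ∏ i ∈ Icc 1 J, (1 - mq p dR n i τ) with hM'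
  set Mτ : ℝ := ∏ i ∈ Icc 1 J, (1 - mq p dR n i (τ+1)) with hMτ
  set P' : ℝ := mq p dR n (J+1) τ with hP'
  set w' : ℝ := ww p dR (J+1) (τ+1) with hw'
  have hM'0 : 0 ≤ M' := Finset.prod_nonneg fun i _ => by
    have := mq_le_one hp0 (j := i) (τ := τ) (dR := dR) hn; linarith
  have hMM : M' ≤ Mτ := by
    apply Finset.prod_le_prod
    · intro i _; have := mq_le_one hp0 (j := i) (τ := τ) (dR := dR) hn; linarith
    · intro i _; have := mq_succ_le hp0 (j := i) (dR := dR) hτ; linarith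
  have hP0 : 0 ≤ P' := mq_nonneg
  have hP1 : P' ≤ 1 := mq_le_one hp0 hn
  have hw0 : 0 ≤ w' := ww_nonneg hp0 (by omega)
  have hwl := weight_le hp0 hp1 hd0 hn hpd (j := J+1) (τ := τ) (by omega) hjn
  push_cast at hwl
  have hw1 : w' ≤ 1 := by
    rw [hw', ww]
    apply div_le_one_of_le₀ _ (mul_nonneg (two_s_pos (by omega : 1 ≤ τ+1)).le hρ.le)
    have hcast : (2 * ((τ+1:ℕ):ℝ) - 1) = 2 * (τ:ℝ) + 1 := by push_cast; ring
    rw [hcast, hcastJ]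
    exact hwl
  have hρw : rho p dR (τ+1) * w' = p * ((J:ℝ)+1) / (2 * (τ:ℝ) + 1) := by
    rw [hw', ww]
    have hcast : (2 * ((τ+1:ℕ):ℝ) - 1) = 2 * (τ:ℝ) + 1 := by push_cast; ring
    rw [hcast, hcastJ]
    field_simp
  have hmqs : mq p dR n (J+1) (τ+1) = P' * (1 - w') := by
    rw [mq_succ hτ, ← hP', ← hw', max_eq_right (by linarith)]
  -- key scalar inequality
  have hkey : p * ((J:ℝ)+1) / (2 * (τ:ℝ) + 1)
      + max 0 (1 - p * (dR + ((J:ℝ)+1)) / (2 * (τ:ℝ) + 1)) ≤ rho p dR (τ+1) := by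
    rcases le_or_gt (1 - p * (dR + ((J:ℝ)+1)) / (2 * (τ:ℝ) + 1)) 0 with hX | hX
    · rw [max_eq_left hX]
      rw [add_zero, div_le_iff₀ hσ]
      calc p * ((J:ℝ)+1) ≤ (2 * (τ:ℝ) + 1) * rho p dR (τ+1) := hwl
        _ = rho p dR (τ+1) * (2 * (τ:ℝ) + 1) := by ring
    · rw [max_eq_right hX.le]
      have hsplit : p * (dR + ((J:ℝ)+1)) / (2 * (τ:ℝ) + 1)
          = p * dR / (2 * (τ:ℝ) + 1) + p * ((J:ℝ)+1) / (2 * (τ:ℝ) + 1) := by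
        field_simp
      have hle : 1 - p * dR / (2 * (τ:ℝ) + 1) ≤ rho p dR (τ+1) := by
        have hcast : (2 * ((τ+1:ℕ):ℝ) - 1) = 2 * (τ:ℝ) + 1 := by push_cast; ring
        rw [rho, hcast]
        exact le_max_left _ _
      rw [hsplit]
      linarith
  -- assemble
  rw [FF_succ_j, FF_succ_j, FF, ← hM', ← hMτ, ← hP', hmqs, AA_succ hτ]
  have hA0 : 0 ≤ AA p dR n τ := (AA_pos hp0 hn).le
  have hPw1 : 0 ≤ 1 - P' * (1 - w') := by nlinarith
  have hinner : M' * (p * ((J:ℝ)+1) / (2 * (τ:ℝ) + 1))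
      + max 0 (1 - p * (dR + ((J:ℝ)+1)) / (2 * (τ:ℝ) + 1)) * (M' * (1 - P'))
      ≤ rho p dR (τ+1) * (Mτ * (1 - P' * (1 - w'))) := by
    have h1 : rho p dR (τ+1) * (M' * (1 - P' * (1 - w')))
        ≤ rho p dR (τ+1) * (Mτ * (1 - P' * (1 - w'))) := by
      apply mul_le_mul_of_nonneg_left _ hρ.le
      exact mul_le_mul_of_nonneg_right hMM hPw1
    refine le_trans ?_ h1
    have hmax0 : 0 ≤ max 0 (1 - p * (dR + ((J:ℝ)+1)) / (2 * (τ:ℝ) + 1)) := le_max_left _ _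
    set c1 : ℝ := p * ((J:ℝ)+1) / (2 * (τ:ℝ) + 1)
    set c2 : ℝ := max 0 (1 - p * (dR + ((J:ℝ)+1)) / (2 * (τ:ℝ) + 1))
    -- goal: M' * c1 + c2 * (M' * (1 - P')) ≤ ρ * (M' * (1 - P'(1-w')))
    have hexp : rho p dR (τ+1) * (M' * (1 - P' * (1 - w')))
        = M' * (rho p dR (τ+1) * (1 - P') + c1 * P') := by
      rw [← hρw]; ring
    rw [hexp]
    have : c1 + c2 ≤ rho p dR (τ+1) := hkey
    nlinarith [mul_le_mul_of_nonneg_left this hM'0]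
  calc p * ((J:ℝ)+1) / (2 * (τ:ℝ) + 1) * (AA p dR n τ * M')
        + max 0 (1 - p * (dR + ((J:ℝ)+1)) / (2 * (τ:ℝ) + 1)) * (AA p dR n τ * (M' * (1 - P')))
      = AA p dR n τ * (M' * (p * ((J:ℝ)+1) / (2 * (τ:ℝ) + 1))
          + max 0 (1 - p * (dR + ((J:ℝ)+1)) / (2 * (τ:ℝ) + 1)) * (M' * (1 - P'))) := by ring
    _ ≤ AA p dR n τ * (rho p dR (τ+1) * (Mτ * (1 - P' * (1 - w')))) := by
        exact mul_le_mul_of_nonneg_left hinner hA0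
    _ = AA p dR n τ * rho p dR (τ+1) * (Mτ * (1 - P' * (1 - w'))) := by ring



lemma log_telescope {a b : ℕ} (hab : a ≤ b) :
    ∑ s ∈ Ioc a b, (Real.log (s+1) - Real.log s) = Real.log (b+1) - Real.log (a+1) := by
  induction b, hab using Nat.le_induction with
  | base => simp
  | succ b hab ih =>
      rw [sum_Ioc_succ_top hab, ih]
      push_cast
      ring

lemma log_diff_le_inv {s : ℕ} (hs : 1 ≤ s) : Real.log (s+1) - Real.log s ≤ 1 / (s:ℝ) := by
  have hs0 : (0:ℝ) < s := by exact_mod_cast hs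
  have h1 : Real.log (s+1) - Real.log s = Real.log (((s:ℝ)+1) / s) := by
    rw [Real.log_div (by positivity) (ne_of_gt hs0)]
  rw [h1]
  have := Real.log_le_sub_one_of_pos (show (0:ℝ) < ((s:ℝ)+1)/s by positivity)
  have heq : ((s:ℝ)+1)/s - 1 = 1/s := by field_simp; ring
  linarith

lemma harmonic_lb {a b : ℕ} (ha : 1 ≤ a) (hab : a ≤ b) :
    Real.log (b+1) - Real.log (a+1) ≤ ∑ s ∈ Ioc a b, 1 / (s:ℝ) := by
  rw [← log_telescope hab]
  apply Finset.sum_le_sum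
  intro s hs
  exact log_diff_le_inv (le_trans ha (mem_Ioc.1 hs).1.le)

include hp0 hp1 hd0 in
lemma AA_le (hn : 1 ≤ n) (hpd : p * dR ≤ 2 * (n:ℝ) + 1) {t : ℕ} (hnt : n < t) :
    AA p dR n t ≤ (((n:ℝ)+1)/(t:ℝ)) ^ (p * dR / 2) * Real.exp 1 := by
  have hn0 : (0:ℝ) ≤ (n:ℝ) := Nat.cast_nonneg n
  have hnn : (0:ℝ) < (n:ℝ) + 1 := by positivity
  have htt : (0:ℝ) < (t:ℝ) := by
    have : (1:ℕ) ≤ t := by omega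
    exact_mod_cast Nat.lt_of_lt_of_le Nat.zero_lt_one this
  have hsplit : AA p dR n t = rho p dR (n+1) * ∏ s ∈ Ioc (n+1) t, rho p dR s := by
    rw [AA, ← prod_Ioc_consecutive _ (Nat.le_succ n) hnt]
    congr 1
    rw [show Ioc n (n+1) = {n+1} by rw [Nat.Ioc_succ_singleton], prod_singleton]
  have hrho1 : rho p dR (n+1) ≤ 1 := by
    have h2 : (0:ℝ) < 2 * ((n+1:ℕ):ℝ) - 1 := by push_cast; linarith
    apply max_le
    · have : 0 ≤ p * dR / (2 * ((n+1:ℕ):ℝ) - 1) := div_nonneg (mul_nonneg hp0.le hd0) h2.le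
      linarith
    · rw [div_le_one h2]
      push_cast
      linarith
  have hpt : ∀ s ∈ Ioc (n+1) t, rho p dR s ≤ Real.exp (-(p * dR) / (2*s)) := by
    intro s hs
    obtain ⟨hs1, _⟩ := mem_Ioc.1 hs
    have hsR : (n:ℝ) + 2 ≤ (s:ℝ) := by exact_mod_cast hs1
    have h2s : (0:ℝ) < 2 * (s:ℝ) - 1 := by linarith
    have hstep1 : 1 - p * dR / (2 * (s:ℝ)) ≤ Real.exp (-(p * dR) / (2*s)) := by
      calc 1 - p * dR / (2 * (s:ℝ)) = -(p * dR) / (2*(s:ℝ)) + 1 := by ring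
        _ ≤ _ := Real.add_one_le_exp _
    have hmono : p * dR / (2 * (s:ℝ)) ≤ p * dR / (2 * (s:ℝ) - 1) := by
      apply div_le_div_of_nonneg_left (mul_nonneg hp0.le hd0) h2s
      linarith
    apply max_le
    · linarith
    · have hsum : p + p * dR ≤ 2 * (s:ℝ) - 1 := by linarith
      have hkey : p / (2 * (s:ℝ) - 1) ≤ 1 - p * dR / (2 * (s:ℝ) - 1) := by
        rw [div_le_iff₀ h2s]
        have h2 : (1 - p * dR / (2 * (s:ℝ) - 1)) * (2 * (s:ℝ) - 1)
            = 2*(s:ℝ) - 1 - p*dR := by field_simp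
        rw [h2]
        linarith
      linarith
  have hντ : ∀ s ∈ Ioc (n+1) t, (0:ℝ) ≤ rho p dR s := by
    intro s hs
    have : n + 2 ≤ s := (mem_Ioc.1 hs).1
    have hsR : (n:ℝ) + 2 ≤ (s:ℝ) := by exact_mod_cast this
    exact le_max_of_le_right (div_nonneg hp0.le (by linarith))
  have hprod : ∏ s ∈ Ioc (n+1) t, rho p dR s
      ≤ ∏ s ∈ Ioc (n+1) t, Real.exp (-(p * dR) / (2*s)) :=
    Finset.prod_le_prod hντ hpt
  rw [← Real.exp_sum] at hprod
  have hsum : ∑ s ∈ Ioc (n+1) t, -(p * dR) / (2*(s:ℝ))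
      = -(p * dR / 2) * ∑ s ∈ Ioc (n+1) t, 1/(s:ℝ) := by
    rw [Finset.mul_sum]
    exact Finset.sum_congr rfl fun s _ => by ring
  have hharm : Real.log ((t:ℝ)+1) - Real.log ((n:ℝ)+2) ≤ ∑ s ∈ Ioc (n+1) t, 1/(s:ℝ) := by
    have h := harmonic_lb (a := n+1) (b := t) (by omega) hnt
    have he : ((n+1:ℕ):ℝ) + 1 = (n:ℝ) + 2 := by push_cast; ring
    rwa [he] at h
  have hfinal : -(p * dR / 2) * ∑ s ∈ Ioc (n+1) t, 1/(s:ℝ)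
      ≤ p * dR / 2 * (Real.log ((n:ℝ)+1) - Real.log t) + 1 := by
    have hpd2 : 0 ≤ p * dR / 2 := by positivity
    have h1 : -(p * dR / 2) * ∑ s ∈ Ioc (n+1) t, 1/(s:ℝ)
        ≤ -(p * dR / 2) * (Real.log ((t:ℝ)+1) - Real.log ((n:ℝ)+2)) := by
      rw [neg_mul, neg_mul, neg_le_neg_iff]
      exact mul_le_mul_of_nonneg_left hharm hpd2
    have hlog1 : Real.log ((n:ℝ)+2) - Real.log ((n:ℝ)+1) ≤ 1/((n:ℝ)+1) := by
      have heq : Real.log ((n:ℝ)+2) - Real.log ((n:ℝ)+1) = Real.log (((n:ℝ)+2)/((n:ℝ)+1)) := by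
        rw [Real.log_div (by positivity) (by positivity)]
      rw [heq]
      have := Real.log_le_sub_one_of_pos (show (0:ℝ) < ((n:ℝ)+2)/((n:ℝ)+1) by positivity)
      have heq2 : ((n:ℝ)+2)/((n:ℝ)+1) - 1 = 1/((n:ℝ)+1) := by
        field_simp
        norm_num
      linarith
    have hlog2 : Real.log (t:ℝ) ≤ Real.log ((t:ℝ)+1) := Real.log_le_log htt (by linarith)
    have hbd : p * dR / 2 * (1/((n:ℝ)+1)) ≤ 1 := by
      have he : p * dR / 2 * (1/((n:ℝ)+1)) = p * dR / (2*((n:ℝ)+1)) := by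
        field_simp
      rw [he, div_le_one (by positivity)]
      linarith
    have h2 : -(p * dR / 2) * (Real.log ((t:ℝ)+1) - Real.log ((n:ℝ)+2))
        ≤ p * dR / 2 * (Real.log ((n:ℝ)+1) - Real.log (t:ℝ)) + 1 := by
      nlinarith [mul_le_mul_of_nonneg_left hlog1 hpd2, mul_le_mul_of_nonneg_left hlog2 hpd2]
    linarith
  have hrpow : (((n:ℝ)+1)/(t:ℝ)) ^ (p * dR / 2)
      = Real.exp (p * dR / 2 * (Real.log ((n:ℝ)+1) - Real.log t)) := by
    rw [Real.rpow_def_of_pos (by positivity), Real.log_div (by positivity) (ne_of_gt htt)]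
    ring_nf
  calc AA p dR n t = rho p dR (n+1) * ∏ s ∈ Ioc (n+1) t, rho p dR s := hsplit
    _ ≤ 1 * Real.exp (∑ s ∈ Ioc (n+1) t, -(p * dR) / (2*(s:ℝ))) := by
        apply mul_le_mul hrho1 hprod (Finset.prod_nonneg hντ) zero_le_one
    _ = Real.exp (-(p * dR / 2) * ∑ s ∈ Ioc (n+1) t, 1/(s:ℝ)) := by rw [one_mul, hsum]
    _ ≤ Real.exp (p * dR / 2 * (Real.log ((n:ℝ)+1) - Real.log t) + 1) := Real.exp_le_exp.2 hfinal
    _ = (((n:ℝ)+1)/(t:ℝ)) ^ (p * dR / 2) * Real.exp 1 := by rw [Real.exp_add, hrpow]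
end Stmt8Aux


theorem stmt8_rec_step {Ω : Type*} {m0 : MeasurableSpace Ω} (μ : Measure Ω)
    [IsProbabilityMeasure μ]
    (ℱ : Filtration ℕ m0) (p : ℝ) {l : ℕ} (D : Fin l → ℕ → Ω → ℕ) (τ : ℕ)
    (hadapted : ∀ i τ', Measurable[ℱ τ'] (D i τ'))
    (hst : ∀ᵐ ω ∂μ, (∀ i, D i (τ+1) ω = D i τ ω) ∨
        (∃ i, D i (τ+1) ω = D i τ ω + 1 ∧ ∀ j, j ≠ i → D j (τ+1) ω = D j τ ω))
    (hcd : ∀ i, μ[Set.indicator {ω | D i (τ+1) ω = D i τ ω + 1} (fun _ => (1:ℝ)) | ℱ τ]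
        =ᵐ[μ] fun ω => p * (D i τ ω : ℝ) / (2 * (τ:ℝ) + 1))
    (k : Fin l → ℕ) (hk1 : ∀ i, 1 ≤ k i) :
    (μ {ω | ∀ i, D i (τ+1) ω = k i}).toReal ≤
      (∑ i, p * ((k i : ℝ) - 1) / (2*(τ:ℝ)+1) *
        (μ {ω | ∀ i', D i' τ ω = Function.update k i (k i - 1) i'}).toReal)
      + (1 - p * (∑ i, (k i : ℝ)) / (2*(τ:ℝ)+1)) *
        (μ {ω | ∀ i, D i τ ω = k i}).toReal := by
  classical
  have hDmeas : ∀ i τ', Measurable (D i τ') := fun i τ' =>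
    (hadapted i τ').mono (ℱ.le τ') le_rfl
  have hSetMeas : ∀ (τ' : ℕ) (k' : Fin l → ℕ), MeasurableSet {ω | ∀ i, D i τ' ω = k' i} := by
    intro τ' k'
    have : {ω | ∀ i, D i τ' ω = k' i} = ⋂ i, (D i τ') ⁻¹' {k' i} := by
      ext ω; simp [Set.mem_iInter]
    rw [this]
    exact MeasurableSet.iInter fun i => (hDmeas i τ') (measurableSet_singleton _)
  have hSetMeasF : ∀ (k' : Fin l → ℕ), MeasurableSet[ℱ τ] {ω | ∀ i, D i τ ω = k' i} := by
    intro k'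
    have : {ω | ∀ i, D i τ ω = k' i} = ⋂ i, (D i τ) ⁻¹' {k' i} := by
      ext ω; simp [Set.mem_iInter]
    rw [this]
    exact MeasurableSet.iInter fun i => (hadapted i τ) (measurableSet_singleton _)
  set J : Fin l → Set Ω := fun i => {ω | D i (τ+1) ω = D i τ ω + 1} with hJdef
  have hJmeas : ∀ i, MeasurableSet (J i) := by
    intro i
    have : J i = ⋃ c : ℕ, ((D i τ) ⁻¹' {c}) ∩ ((D i (τ+1)) ⁻¹' {c+1}) := by
      ext ω
      simp only [hJdef, Set.mem_setOf_eq, Set.mem_iUnion, Set.mem_inter_iff,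
        Set.mem_preimage, Set.mem_singleton_iff]
      constructor
      · intro h; exact ⟨D i τ ω, rfl, h⟩
      · rintro ⟨c, h1, h2⟩; rw [h1]; exact h2
    rw [this]
    exact MeasurableSet.iUnion fun c =>
      ((hDmeas i τ) (measurableSet_singleton _)).inter
        ((hDmeas i (τ+1)) (measurableSet_singleton _))
  set S : Set Ω := {ω | ∀ i, D i τ ω = k i} with hSdef
  set T : Set Ω := {ω | ∀ i, D i (τ+1) ω = k i} with hTdef
  set Si : Fin l → Set Ω :=
    fun i => {ω | ∀ i', D i' τ ω = Function.update k i (k i - 1) i'} with hSidef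
  -- the set-integral computation
  have hIC : ∀ (i : Fin l) (s : Set Ω), MeasurableSet[ℱ τ] s → ∀ c : ℕ,
      (∀ ω ∈ s, D i τ ω = c) →
      (μ (J i ∩ s)).toReal = p * (c:ℝ) / (2*(τ:ℝ)+1) * (μ s).toReal := by
    intro i s hs c hc
    have hsm : MeasurableSet s := ℱ.le τ _ hs
    have hint : Integrable ((J i).indicator fun _ => (1:ℝ)) μ :=
      (integrable_const 1).indicator (hJmeas i)
    have h1 : ∫ ω in s, (J i).indicator (fun _ => (1:ℝ)) ω ∂μ = (μ (J i ∩ s)).toReal := by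
      rw [setIntegral_indicator (hJmeas i), setIntegral_const, smul_eq_mul, mul_one,
        Set.inter_comm, measureReal_def]
    have h2 := setIntegral_condExp (ℱ.le τ) hint hs
    have h3 : ∫ ω in s, (μ[(J i).indicator (fun _ => (1:ℝ))|ℱ τ]) ω ∂μ
        = ∫ ω in s, (p * (c:ℝ) / (2*(τ:ℝ)+1)) ∂μ := by
      rw [setIntegral_congr_ae hsm ((hcd i).mono fun ω hω _ => hω)]
      apply setIntegral_congr_fun hsm
      intro ω hω
      simp only
      rw [hc ω hω]
    rw [← h1, ← h2, h3, setIntegral_const, smul_eq_mul, measureReal_def]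
    ring
  -- null bad set
  set N : Set Ω := toMeasurable μ {ω | ¬ ((∀ i, D i (τ+1) ω = D i τ ω) ∨
      (∃ i, D i (τ+1) ω = D i τ ω + 1 ∧ ∀ j, j ≠ i → D j (τ+1) ω = D j τ ω))} with hNdef
  have hNnull : μ N = 0 := by
    rw [hNdef, measure_toMeasurable]
    exact ae_iff.1 hst
  have hNmeas : MeasurableSet N := measurableSet_toMeasurable _ _
  have hgood : ∀ ω, ω ∉ N → ((∀ i, D i (τ+1) ω = D i τ ω) ∨
      (∃ i, D i (τ+1) ω = D i τ ω + 1 ∧ ∀ j, j ≠ i → D j (τ+1) ω = D j τ ω)) := by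
    intro ω hω
    by_contra h
    exact hω (subset_toMeasurable _ _ h)
  -- inclusion
  have hsub : T ⊆ (⋃ i, Si i ∩ J i) ∪ ((S ∩ ⋂ i, (J i)ᶜ) ∪ N) := by
    intro ω hω
    by_cases hN : ω ∈ N
    · exact Or.inr (Or.inr hN)
    · have hg := hgood ω hN
      by_cases hJ : ∃ i, ω ∈ J i
      · obtain ⟨i, hJi⟩ := hJ
        left
        refine Set.mem_iUnion.2 ⟨i, ?_, hJi⟩
        -- ω ∈ Si i
        have hjump : D i (τ+1) ω = D i τ ω + 1 ∧ ∀ j, j ≠ i → D j (τ+1) ω = D j τ ω := by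
          rcases hg with hstay | ⟨i0, hi0, hrest⟩
          · exact absurd hJi (by simp only [hJdef, Set.mem_setOf_eq, hstay i]; omega)
          · rcases eq_or_ne i i0 with rfl | hne
            · exact ⟨hi0, hrest⟩
            · exact absurd hJi (by
                simp only [hJdef, Set.mem_setOf_eq, hrest i hne]; omega)
        intro i'
        rcases eq_or_ne i' i with rfl | hne
        · rw [Function.update_self]
          have h1 : D i' (τ+1) ω = k i' := hω i'
          have h2 : D i' (τ+1) ω = D i' τ ω + 1 := hjump.1
          omega
        · rw [Function.update_of_ne hne]
          rw [← hjump.2 i' hne]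
          exact hω i'
      · push_neg at hJ
        right; left
        constructor
        · intro i
          have hstay : ∀ i, D i (τ+1) ω = D i τ ω := by
            rcases hg with hstay | ⟨i0, hi0, _⟩
            · exact hstay
            · exact absurd hi0 (fun h => hJ i0 h)
          rw [← hstay i]
          exact hω i
        · exact Set.mem_iInter.2 fun i => hJ i
  -- measure of T
  have hμT : μ T ≤ (∑ i, μ (Si i ∩ J i)) + μ (S ∩ ⋂ i, (J i)ᶜ) := by
    calc μ T ≤ μ ((⋃ i, Si i ∩ J i) ∪ ((S ∩ ⋂ i, (J i)ᶜ) ∪ N)) := measure_mono hsub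
      _ ≤ μ (⋃ i, Si i ∩ J i) + μ ((S ∩ ⋂ i, (J i)ᶜ) ∪ N) := measure_union_le _ _
      _ ≤ μ (⋃ i, Si i ∩ J i) + (μ (S ∩ ⋂ i, (J i)ᶜ) + μ N) :=
          add_le_add le_rfl (measure_union_le _ _)
      _ = μ (⋃ i, Si i ∩ J i) + μ (S ∩ ⋂ i, (J i)ᶜ) := by rw [hNnull, add_zero]
      _ ≤ (∑ i, μ (Si i ∩ J i)) + μ (S ∩ ⋂ i, (J i)ᶜ) :=
          add_le_add (measure_iUnion_fintype_le _ _) le_rfl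
  -- disjointness for stay term
  have hdisjJ : ∀ i i' : Fin l, i ≠ i' → ∀ ω, ω ∉ N → ω ∈ J i → ω ∈ J i' → False := by
    intro i i' hne ω hωN hJi hJi'
    rcases hgood ω hωN with hstay | ⟨i0, hi0, hrest⟩
    · have := hstay i
      simp only [hJdef, Set.mem_setOf_eq] at hJi
      omega
    · rcases eq_or_ne i i0 with rfl | h1
      · have := hrest i' (fun h => hne h.symm)
        simp only [hJdef, Set.mem_setOf_eq] at hJi'
        omega
      · have := hrest i h1
        simp only [hJdef, Set.mem_setOf_eq] at hJi
        omega
  -- stay bound (in ENNReal)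
  have hstay : μ (S ∩ ⋂ i, (J i)ᶜ) + ∑ i, μ ((S ∩ J i) \ N) ≤ μ S := by
    have hdisj2 : Pairwise (Function.onFun Disjoint fun i => (S ∩ J i) \ N) := by
      intro i i' hne
      apply Set.disjoint_left.2
      intro ω hω hω'
      exact hdisjJ i i' hne ω hω.2 hω.1.2 hω'.1.2
    have hmeas2 : ∀ i, MeasurableSet ((S ∩ J i) \ N) :=
      fun i => ((hSetMeas τ k).inter (hJmeas i)).diff hNmeas
    have hU : μ (⋃ i, (S ∩ J i) \ N) = ∑ i, μ ((S ∩ J i) \ N) := by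
      rw [measure_iUnion hdisj2 hmeas2, tsum_fintype]
    have hdisj3 : Disjoint (S ∩ ⋂ i, (J i)ᶜ) (⋃ i, (S ∩ J i) \ N) := by
      apply Set.disjoint_left.2
      intro ω hω hω'
      obtain ⟨i, hi⟩ := Set.mem_iUnion.1 hω'
      exact (Set.mem_iInter.1 hω.2 i) hi.1.2
    calc μ (S ∩ ⋂ i, (J i)ᶜ) + ∑ i, μ ((S ∩ J i) \ N)
        = μ (S ∩ ⋂ i, (J i)ᶜ) + μ (⋃ i, (S ∩ J i) \ N) := by rw [hU]
      _ = μ ((S ∩ ⋂ i, (J i)ᶜ) ∪ ⋃ i, (S ∩ J i) \ N) := by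
          rw [measure_union hdisj3 (MeasurableSet.iUnion hmeas2)]
      _ ≤ μ S := by
          apply measure_mono
          intro ω hω
          rcases hω with h | h
          · exact h.1
          · obtain ⟨i, hi⟩ := Set.mem_iUnion.1 h
            exact hi.1.1
  have hJS : ∀ i, μ ((S ∩ J i) \ N) = μ (S ∩ J i) := fun i => measure_diff_null hNnull
  -- values
  have hSi_val : ∀ i, (μ (Si i ∩ J i)).toReal
      = p * ((k i : ℝ) - 1) / (2*(τ:ℝ)+1) * (μ (Si i)).toReal := by
    intro i
    rw [Set.inter_comm]
    have := hIC i (Si i) (hSetMeasF _) (k i - 1) (fun ω hω => by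
      have := hω i
      rwa [Function.update_self] at this)
    rw [this]
    congr 2
    have : ((k i - 1 : ℕ) : ℝ) = (k i : ℝ) - 1 := by
      have := hk1 i
      push_cast [Nat.cast_sub this]
      ring
    rw [this]
  have hS_val : ∀ i, (μ (S ∩ J i)).toReal
      = p * (k i : ℝ) / (2*(τ:ℝ)+1) * (μ S).toReal := by
    intro i
    rw [Set.inter_comm]
    exact hIC i S (hSetMeasF _) (k i) (fun ω hω => hω i)
  -- convert to real
  have hfin : ∀ s : Set Ω, μ s ≠ ⊤ := fun s => measure_ne_top μ s
  have hTreal : (μ T).toReal ≤ (∑ i, (μ (Si i ∩ J i)).toReal) + (μ (S ∩ ⋂ i, (J i)ᶜ)).toReal := by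
    have h1 := ENNReal.toReal_mono (by
      refine ENNReal.add_ne_top.2 ⟨?_, hfin _⟩
      exact ENNReal.sum_ne_top.2 fun i _ => hfin _) hμT
    rwa [ENNReal.toReal_add (ENNReal.sum_ne_top.2 fun i _ => hfin _) (hfin _),
      ENNReal.toReal_sum (fun i _ => hfin _)] at h1
  have hstayreal : (μ (S ∩ ⋂ i, (J i)ᶜ)).toReal
      ≤ (μ S).toReal - ∑ i, (μ (S ∩ J i)).toReal := by
    have h1 := ENNReal.toReal_mono (hfin S) hstay
    rw [ENNReal.toReal_add (hfin _) (ENNReal.sum_ne_top.2 fun i _ => hfin _),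
      ENNReal.toReal_sum (fun i _ => hfin _)] at h1
    have h2 : ∀ i, (μ ((S ∩ J i) \ N)).toReal = (μ (S ∩ J i)).toReal :=
      fun i => by rw [hJS i]
    have h3 : ∑ i, (μ ((S ∩ J i) \ N)).toReal = ∑ i, (μ (S ∩ J i)).toReal :=
      Finset.sum_congr rfl fun i _ => h2 i
    linarith [h3 ▸ h1]
  -- final assembly
  have hfinal : (μ S).toReal - ∑ i, (μ (S ∩ J i)).toReal
      = (1 - p * (∑ i, (k i : ℝ)) / (2*(τ:ℝ)+1)) * (μ S).toReal := by
    have : ∑ i, (μ (S ∩ J i)).toReal = p * (∑ i, (k i : ℝ)) / (2*(τ:ℝ)+1) * (μ S).toReal := by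
      rw [Finset.sum_congr rfl fun i _ => hS_val i, ← Finset.sum_mul]
      congr 1
      rw [← Finset.sum_div, ← Finset.mul_sum]
    rw [this]
    ring
  calc (μ T).toReal ≤ (∑ i, (μ (Si i ∩ J i)).toReal) + (μ (S ∩ ⋂ i, (J i)ᶜ)).toReal := hTreal
    _ ≤ (∑ i, (μ (Si i ∩ J i)).toReal) + ((μ S).toReal - ∑ i, (μ (S ∩ J i)).toReal) := by
        linarith [hstayreal]
    _ = (∑ i, p * ((k i : ℝ) - 1) / (2*(τ:ℝ)+1) * (μ (Si i)).toReal)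
        + (1 - p * (∑ i, (k i : ℝ)) / (2*(τ:ℝ)+1)) * (μ S).toReal := by
        rw [hfinal, Finset.sum_congr rfl fun i _ => hSi_val i]
    _ = _ := rfl


theorem stmt8_as_bounds {Ω : Type*} {m0 : MeasurableSpace Ω} (μ : Measure Ω)
    {l : ℕ} (D : Fin l → ℕ → Ω → ℕ) (dv : Fin l → ℕ) (n t : ℕ)
    (hinit : ∀ i, ∀ᵐ ω ∂μ, D i n ω = dv i)
    (hstep' : ∀ τ : ℕ, n ≤ τ → τ + 1 ≤ t → ∀ᵐ ω ∂μ,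
      (∀ i, D i (τ+1) ω = D i τ ω) ∨
        (∃ i, D i (τ+1) ω = D i τ ω + 1 ∧ ∀ j, j ≠ i → D j (τ+1) ω = D j τ ω)) :
    ∀ᵐ ω ∂μ, ∀ τ, n ≤ τ → τ ≤ t →
      ((∀ i, dv i ≤ D i τ ω) ∧ (∑ i, D i τ ω) ≤ (∑ i, dv i) + (τ - n)) := by
  classical
  have h0 : ∀ᵐ ω ∂μ, ∀ i, D i n ω = dv i := ae_all_iff.2 hinit
  have h1 : ∀ᵐ ω ∂μ, ∀ τ : ℕ, n ≤ τ → τ + 1 ≤ t →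
      ((∀ i, D i (τ+1) ω = D i τ ω) ∨
        (∃ i, D i (τ+1) ω = D i τ ω + 1 ∧ ∀ j, j ≠ i → D j (τ+1) ω = D j τ ω)) := by
    rw [ae_all_iff]
    intro τ
    by_cases hτ : n ≤ τ ∧ τ + 1 ≤ t
    · exact (hstep' τ hτ.1 hτ.2).mono fun ω h _ _ => h
    · exact ae_of_all _ fun ω h1 h2 => absurd ⟨h1, h2⟩ hτ
  filter_upwards [h0, h1] with ω hω0 hω1
  intro τ hnτ
  induction τ, hnτ using Nat.le_induction with
  | base =>
      intro _
      refine ⟨fun i => (hω0 i).ge, ?_⟩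
      have : ∑ i, D i n ω = ∑ i, dv i := Finset.sum_congr rfl fun i _ => hω0 i
      omega
  | succ τ hτ ih =>
      intro hle
      have ih' := ih (by omega)
      rcases hω1 τ hτ hle with hstay | ⟨i0, hi0, hrest⟩
      · have hsame : ∑ i, D i (τ+1) ω = ∑ i, D i τ ω :=
          Finset.sum_congr rfl fun i _ => hstay i
        refine ⟨fun i => (hstay i) ▸ ih'.1 i, ?_⟩
        have := ih'.2
        omega
      · constructor
        · intro i
          rcases eq_or_ne i i0 with rfl | hne
          · have := ih'.1 i
            omega
          · rw [hrest i hne]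
            exact ih'.1 i
        · have hsum : ∑ i, D i (τ+1) ω = (∑ i, D i τ ω) + 1 := by
            have he : ∀ i ∈ Finset.univ (α := Fin l),
                D i (τ+1) ω = D i τ ω + (if i = i0 then 1 else 0) := by
              intro i _
              rcases eq_or_ne i i0 with rfl | hne
              · simp [hi0]
              · simp [hrest i hne, hne]
            rw [Finset.sum_congr rfl he, Finset.sum_add_distrib, Finset.sum_ite_eq' _ i0]
            simp
          have := ih'.2
          omega


section Main

variable {p : ℝ} {l : ℕ} {Ωt : Type*} [mΩt : MeasurableSpace Ωt]

theorem stmt8_main (μt : Measure Ωt) [IsProbabilityMeasure μt] (ℱt : Filtration ℕ mΩt)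
    (hp0 : 0 < p) (hp1 : p ≤ 1)
    (dvt rvt : Fin l → ℕ) (n t : ℕ) (hn1 : 1 ≤ n) (hnt : n < t)
    (Dt : Fin l → ℕ → Ωt → ℕ)
    (hdpos : ∀ i, 1 ≤ dvt i)
    (hinit' : ∀ i, ∀ᵐ ω ∂μt, Dt i n ω = dvt i)
    (hadapted' : ∀ i τ, Measurable[ℱt τ] (Dt i τ))
    (hstep2 : ∀ τ : ℕ, n ≤ τ → τ + 1 ≤ t → ∀ᵐ ω ∂μt,
      (∀ i, Dt i (τ+1) ω = Dt i τ ω) ∨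
        (∃ i, Dt i (τ+1) ω = Dt i τ ω + 1 ∧ ∀ j, j ≠ i → Dt j (τ+1) ω = Dt j τ ω))
    (hcd' : ∀ (i : Fin l) (τ : ℕ), n ≤ τ → τ + 1 ≤ t →
      μt[Set.indicator {ω | Dt i (τ+1) ω = Dt i τ ω + 1} (fun _ => (1 : ℝ)) | ℱt τ]
        =ᵐ[μt] fun ω => p * (Dt i τ ω : ℝ) / (2 * (τ : ℝ) + 1)) :
    (μt {ω | ∀ i, Dt i t ω = dvt i + rvt i}).toReal ≤
      (∏ i, (((rvt i + dvt i - 1).choose (dvt i - 1) : ℕ) : ℝ)) *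
        (((n : ℝ) + 1) / (t : ℝ)) ^ (p * ((∑ i, dvt i : ℕ) : ℝ) / 2) *
        Real.exp (2 + (n : ℝ) - p * ((∑ i, dvt i : ℕ) : ℝ) / 2 +
          3 * p * ((∑ i, rvt i : ℕ) : ℝ) / (t : ℝ) ^ (p / 2)) := by
  classical
  set d : ℕ := ∑ i, dvt i with hd_def
  set r : ℕ := ∑ i, rvt i with hr_def
  have hdR0 : (0:ℝ) ≤ (d:ℝ) := Nat.cast_nonneg d
  have ht0R : (0:ℝ) < (t:ℝ) := by
    have : 0 < t := by omega
    exact_mod_cast this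
  have hDmeas : ∀ i τ', Measurable (Dt i τ') := fun i τ' =>
    (hadapted' i τ').mono (ℱt.le τ') le_rfl
  have hJmeas : ∀ (i : Fin l) (τ : ℕ),
      MeasurableSet {ω | Dt i (τ+1) ω = Dt i τ ω + 1} := by
    intro i τ
    have : {ω | Dt i (τ+1) ω = Dt i τ ω + 1}
        = ⋃ c : ℕ, ((Dt i τ) ⁻¹' {c}) ∩ ((Dt i (τ+1)) ⁻¹' {c+1}) := by
      ext ω
      simp only [Set.mem_setOf_eq, Set.mem_iUnion, Set.mem_inter_iff,
        Set.mem_preimage, Set.mem_singleton_iff]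
      constructor
      · intro h; exact ⟨Dt i τ ω, rfl, h⟩
      · rintro ⟨c, h1, h2⟩; rw [h1]; exact h2
    rw [this]
    exact MeasurableSet.iUnion fun c =>
      ((hDmeas i τ) (measurableSet_singleton _)).inter
        ((hDmeas i (τ+1)) (measurableSet_singleton _))
  -- Case split on consistency bound p * d ≤ 2n+1
  by_cases hpd : p * (d:ℝ) ≤ 2 * (n:ℝ) + 1
  swap
  · -- contradiction branch
    exfalso
    have hn1t : n + 1 ≤ t := hnt
    set Jc : Fin l → Set Ωt := fun i => {ω | Dt i (n+1) ω = Dt i n ω + 1} with hJc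
    have hint : ∀ i, Integrable ((Jc i).indicator fun _ => (1:ℝ)) μt :=
      fun i => (integrable_const 1).indicator (hJmeas i n)
    have h1 : (∑ i, (Jc i).indicator (fun _ => (1:ℝ))) ≤ᵐ[μt] (fun _ => (1:ℝ)) := by
      filter_upwards [hstep2 n le_rfl hn1t] with ω hω
      rw [Finset.sum_apply]
      rcases hω with hstay | ⟨i0, hi0, hrest⟩
      · have hz : ∀ i ∈ Finset.univ (α := Fin l),
            (Jc i).indicator (fun _ => (1:ℝ)) ω = 0 := by
          intro i _
          apply Set.indicator_of_notMem
          simp only [hJc, Set.mem_setOf_eq, hstay i]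
          omega
        rw [Finset.sum_congr rfl hz]
        simp
      · calc ∑ i, (Jc i).indicator (fun _ => (1:ℝ)) ω
            ≤ ∑ i, if i = i0 then (1:ℝ) else 0 := by
              apply Finset.sum_le_sum
              intro i _
              rcases eq_or_ne i i0 with rfl | hne
              · rw [if_pos rfl]
                by_cases h : ω ∈ Jc i <;> simp [Set.indicator_apply, h]
              · rw [if_neg hne, Set.indicator_of_notMem]
                simp only [hJc, Set.mem_setOf_eq, hrest i hne]
                omega
          _ = 1 := by rw [Finset.sum_ite_eq' Finset.univ i0]; simp
    have h2 : μt[(∑ i, (Jc i).indicator (fun _ => (1:ℝ))) | ℱt n]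
        ≤ᵐ[μt] fun _ => (1:ℝ) := by
      have hh := condExp_mono (μ := μt) (m := ℱt n)
        (integrable_finset_sum' Finset.univ (fun i _ => hint i)) (integrable_const 1) h1
      rwa [condExp_const (ℱt.le n)] at hh
    have h3 := condExp_finsetSum (μ := μt) (m := ℱt n)
      (fun (i : Fin l) (_ : i ∈ Finset.univ) => hint i)
    have h4 : ∀ᵐ ω ∂μt, ∑ i, p * ((dvt i : ℕ):ℝ)/(2*(n:ℝ)+1) ≤ 1 := by
      have hinits : ∀ᵐ ω ∂μt, ∀ i, Dt i n ω = dvt i := ae_all_iff.2 hinit'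
      have hcds : ∀ᵐ ω ∂μt, ∀ i,
          (μt[(Jc i).indicator (fun _ => (1:ℝ))|ℱt n]) ω = p * (Dt i n ω:ℝ)/(2*(n:ℝ)+1) :=
        ae_all_iff.2 (fun i => hcd' i n le_rfl hn1t)
      filter_upwards [h2, h3, hinits, hcds] with ω hω2 hω3 hωi hωc
      calc ∑ i, p * ((dvt i : ℕ):ℝ)/(2*(n:ℝ)+1)
          = ∑ i, (μt[(Jc i).indicator (fun _ => (1:ℝ))|ℱt n]) ω := by
            refine Finset.sum_congr rfl fun i _ => ?_
            rw [hωc i, hωi i]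
        _ = (μt[(∑ i, (Jc i).indicator (fun _ => (1:ℝ)))|ℱt n]) ω := by
            rw [hω3, Finset.sum_apply]
        _ ≤ 1 := hω2
    haveI : (ae μt).NeBot := ae_neBot.2 (IsProbabilityMeasure.ne_zero μt)
    obtain ⟨ω0, hω0⟩ := h4.exists
    have hsum : ∑ i, p * ((dvt i : ℕ):ℝ)/(2*(n:ℝ)+1) = p * (d:ℝ)/(2*(n:ℝ)+1) := by
      rw [← Finset.sum_div, ← Finset.mul_sum]
      congr 2
      rw [hd_def]
      push_cast
      ring
    rw [hsum] at hω0
    have h2n : (0:ℝ) < 2*(n:ℝ)+1 := by positivity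
    rw [div_le_one h2n] at hω0
    exact hpd hω0
  -- main branch
  · have hzero : ∀ τ' : ℕ, n ≤ τ' → τ' ≤ t → ∀ k : Fin l → ℕ,
        ((∃ i, k i < dvt i) ∨ d + (τ' - n) < ∑ i, k i) →
        μt {ω | ∀ i, Dt i τ' ω = k i} = 0 := by
      intro τ' h1 h2 k hk
      have hae := stmt8_as_bounds μt Dt dvt n t hinit' hstep2
      apply measure_mono_null _ (ae_iff.1 hae)
      intro ω hω
      simp only [Set.mem_setOf_eq] at hω ⊢
      intro hP
      obtain ⟨hP1, hP2⟩ := hP τ' h1 h2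
      rcases hk with ⟨i0, hi0⟩ | hsum
      · have := hP1 i0
        rw [hω i0] at this
        omega
      · have : ∑ i, k i = ∑ i, Dt i τ' ω := Finset.sum_congr rfl fun i _ => (hω i).symm
        rw [hd_def] at hsum
        omega
    -- main induction
    have hmain : ∀ τ : ℕ, n ≤ τ → τ ≤ t → ∀ k : Fin l → ℕ,
        (μt {ω | ∀ i, Dt i τ ω = k i}).toReal ≤
          (∏ i, (((k i - 1).choose (dvt i - 1) : ℕ):ℝ)) *
            Stmt8Aux.FF p (d:ℝ) n (∑ i, (k i - dvt i)) τ := by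
      intro τ hτ
      induction τ, hτ using Nat.le_induction with
      | base =>
          intro _ k
          have hCC0 : (0:ℝ) ≤ ∏ i, (((k i - 1).choose (dvt i - 1) : ℕ):ℝ) :=
            Finset.prod_nonneg fun i _ => by positivity
          by_cases hkeq : ∀ i, k i = dvt i
          · have hC : (∏ i, (((k i - 1).choose (dvt i - 1) : ℕ):ℝ)) = 1 := by
              apply Finset.prod_eq_one
              intro i _
              rw [hkeq i, Nat.choose_self]
              norm_num
            have hj : (∑ i, (k i - dvt i)) = 0 :=
              Finset.sum_eq_zero fun i _ => by rw [hkeq i]; omega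
            have hFF : Stmt8Aux.FF p (d:ℝ) n 0 n = 1 := by
              simp [Stmt8Aux.FF_zero, Stmt8Aux.AA]
            rw [hC, hj, hFF, one_mul]
            calc (μt {ω | ∀ i, Dt i n ω = k i}).toReal
                ≤ (1 : ENNReal).toReal := ENNReal.toReal_mono ENNReal.one_ne_top prob_le_one
              _ = 1 := by simp
          · push_neg at hkeq
            obtain ⟨i0, hi0⟩ := hkeq
            have h0 : μt {ω | ∀ i, Dt i n ω = k i} = 0 := by
              apply measure_mono_null _ (ae_iff.1 (hinit' i0))
              intro ω hω
              simp only [Set.mem_setOf_eq] at hω ⊢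
              rw [hω i0]
              exact fun h => hi0 h
            rw [h0]
            simp only [ENNReal.toReal_zero]
            exact mul_nonneg hCC0 (Stmt8Aux.FF_nonneg hp0 hn1)
      | succ τ hτ ih =>
          intro hle k
          have hτt : τ ≤ t := by omega
          have ih' := ih hτt
          have hCC0 : (0:ℝ) ≤ ∏ i, (((k i - 1).choose (dvt i - 1) : ℕ):ℝ) :=
            Finset.prod_nonneg fun i _ => by positivity
          have hRHS0 : (0:ℝ) ≤ (∏ i, (((k i - 1).choose (dvt i - 1) : ℕ):ℝ)) *
              Stmt8Aux.FF p (d:ℝ) n (∑ i, (k i - dvt i)) (τ+1) :=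
            mul_nonneg hCC0 (Stmt8Aux.FF_nonneg hp0 hn1)
          by_cases hka : ∀ i, dvt i ≤ k i
          swap
          · push_neg at hka
            obtain ⟨i0, hi0⟩ := hka
            have h0 : μt {ω | ∀ i, Dt i (τ+1) ω = k i} = 0 :=
              hzero (τ+1) (by omega) hle k (Or.inl ⟨i0, hi0⟩)
            rw [h0]
            simpa using hRHS0
          by_cases hkb : ∑ i, k i ≤ d + (τ + 1 - n)
          swap
          · push_neg at hkb
            have h0 : μt {ω | ∀ i, Dt i (τ+1) ω = k i} = 0 :=
              hzero (τ+1) (by omega) hle k (Or.inr hkb)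
            rw [h0]
            simpa using hRHS0
          · -- main recursion case
            have hk1 : ∀ i, 1 ≤ k i := fun i => le_trans (hdpos i) (hka i)
            have hsum_eq : (∑ i, (k i - dvt i)) + d = ∑ i, k i := by
              rw [hd_def, ← Finset.sum_add_distrib]
              exact Finset.sum_congr rfl fun i _ => by have := hka i; omega
            have hR := stmt8_rec_step μt ℱt p Dt τ hadapted' (hstep2 τ hτ hle)
              (fun i => hcd' i τ hτ hle) k hk1
            refine le_trans hR ?_
            have h2τ : (0:ℝ) < 2*(τ:ℝ)+1 := by positivity
            by_cases hj0 : (∑ i, (k i - dvt i)) = 0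
            · -- no jumps accumulated
              have hkeq : ∀ i, k i = dvt i := by
                intro i
                have h1 := Finset.sum_eq_zero_iff.1 hj0 i (Finset.mem_univ i)
                have := hka i
                omega
              have hsum0 : (∑ i, p * ((k i : ℝ) - 1) / (2*(τ:ℝ)+1) *
                  (μt {ω | ∀ i', Dt i' τ ω
                    = Function.update k i (k i - 1) i'}).toReal) = 0 := by
                apply Finset.sum_eq_zero
                intro i _
                have h0 : μt {ω | ∀ i', Dt i' τ ω = Function.update k i (k i - 1) i'} = 0 := by
                  apply hzero τ hτ hτt
                  refine Or.inl ⟨i, ?_⟩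
                  rw [Function.update_self]
                  have := hk1 i
                  have := hkeq i
                  have := hdpos i
                  omega
                rw [h0]
                simp
              rw [hsum0, zero_add]
              have hsumk : (∑ i, (k i:ℝ)) = (d:ℝ) := by
                rw [hd_def]
                push_cast
                exact Finset.sum_congr rfl fun i _ => by rw [hkeq i]
              rw [hsumk, hj0]
              have hIHk := ih' k
              rw [hj0] at hIHk
              have hg0 : (0:ℝ) ≤ (μt {ω | ∀ i, Dt i τ ω = k i}).toReal := ENNReal.toReal_nonneg
              have hFF0 : (0:ℝ) ≤ Stmt8Aux.FF p (d:ℝ) n 0 τ := Stmt8Aux.FF_nonneg hp0 hn1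
              have hREQ := Stmt8Aux.REQ0 (dR := (d:ℝ)) (τ := τ) hp0 hn1 hτ
              have step1 : (1 - p * (d:ℝ)/(2*(τ:ℝ)+1)) * (μt {ω | ∀ i, Dt i τ ω = k i}).toReal
                  ≤ max 0 (1 - p * (d:ℝ)/(2*(τ:ℝ)+1)) *
                    ((∏ i, (((k i - 1).choose (dvt i - 1) : ℕ):ℝ)) * Stmt8Aux.FF p (d:ℝ) n 0 τ) := by
                rcases le_or_gt (1 - p * (d:ℝ)/(2*(τ:ℝ)+1)) 0 with hc | hc
                · have hl : (1 - p * (d:ℝ)/(2*(τ:ℝ)+1)) *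
                      (μt {ω | ∀ i, Dt i τ ω = k i}).toReal ≤ 0 :=
                    mul_nonpos_iff.2 (Or.inr ⟨hc, hg0⟩)
                  refine le_trans hl (mul_nonneg (le_max_left _ _) (mul_nonneg hCC0 hFF0))
                · rw [max_eq_right hc.le]
                  exact mul_le_mul_of_nonneg_left hIHk hc.le
              calc (1 - p * (d:ℝ)/(2*(τ:ℝ)+1)) * (μt {ω | ∀ i, Dt i τ ω = k i}).toReal
                  ≤ max 0 (1 - p * (d:ℝ)/(2*(τ:ℝ)+1)) *
                    ((∏ i, (((k i - 1).choose (dvt i - 1) : ℕ):ℝ)) * Stmt8Aux.FF p (d:ℝ) n 0 τ) :=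
                    step1
                _ = (∏ i, (((k i - 1).choose (dvt i - 1) : ℕ):ℝ)) *
                    (max 0 (1 - p * (d:ℝ)/(2*(τ:ℝ)+1)) * Stmt8Aux.FF p (d:ℝ) n 0 τ) := by ring
                _ ≤ (∏ i, (((k i - 1).choose (dvt i - 1) : ℕ):ℝ)) *
                    Stmt8Aux.FF p (d:ℝ) n 0 (τ+1) := mul_le_mul_of_nonneg_left hREQ hCC0
            · -- at least one jump accumulated
              obtain ⟨J, hJ⟩ : ∃ J, (∑ i, (k i - dvt i)) = J + 1 :=
                ⟨(∑ i, (k i - dvt i)) - 1, by omega⟩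
              have hFFJ0 : (0:ℝ) ≤ Stmt8Aux.FF p (d:ℝ) n J τ := Stmt8Aux.FF_nonneg hp0 hn1
              have hFFJ10 : (0:ℝ) ≤ Stmt8Aux.FF p (d:ℝ) n (J+1) τ := Stmt8Aux.FF_nonneg hp0 hn1
              -- per-i jump bound
              have hjump_i : ∀ i : Fin l,
                  p * ((k i : ℝ) - 1) / (2*(τ:ℝ)+1) *
                    (μt {ω | ∀ i', Dt i' τ ω = Function.update k i (k i - 1) i'}).toReal
                  ≤ p * ((k i : ℝ) - (dvt i : ℝ)) / (2*(τ:ℝ)+1) *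
                    ((∏ i', (((k i' - 1).choose (dvt i' - 1) : ℕ):ℝ)) *
                      Stmt8Aux.FF p (d:ℝ) n J τ) := by
                intro i
                rcases eq_or_lt_of_le (hka i) with heq | hlt
                · have h0 : μt {ω | ∀ i', Dt i' τ ω = Function.update k i (k i - 1) i'} = 0 := by
                    apply hzero τ hτ hτt
                    refine Or.inl ⟨i, ?_⟩
                    rw [Function.update_self]
                    have := hdpos i
                    omega
                  rw [h0]
                  simp only [ENNReal.toReal_zero, mul_zero]
                  have hz : (k i:ℝ) - (dvt i:ℝ) = 0 := by
                    rw [sub_eq_zero]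
                    exact_mod_cast heq.symm
                  rw [hz]
                  simp
                · have hIH := ih' (Function.update k i (k i - 1))
                  have heq_fun : (fun i' => Function.update k i (k i - 1) i' - dvt i')
                      = Function.update (fun i' => k i' - dvt i') i (k i - 1 - dvt i) := by
                    funext i'
                    rcases eq_or_ne i' i with rfl | hne
                    · rw [Function.update_self, Function.update_self]
                    · rw [Function.update_of_ne hne, Function.update_of_ne hne]
                  have hjs : (∑ i', (Function.update k i (k i - 1) i' - dvt i')) = J := by
                    have e1 : (∑ i', (Function.update k i (k i - 1) i' - dvt i'))
                        = (k i - 1 - dvt i) + ∑ i' ∈ Finset.univ \ {i}, (k i' - dvt i') := by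
                      rw [show (fun i' => Function.update k i (k i - 1) i' - dvt i')
                          = Function.update (fun i' => k i' - dvt i') i (k i - 1 - dvt i)
                          from heq_fun]
                      exact Finset.sum_update_of_mem (Finset.mem_univ i) _ _
                    have e2 : (∑ i', (k i' - dvt i'))
                        = (k i - dvt i) + ∑ i' ∈ Finset.univ \ {i}, (k i' - dvt i') :=
                      Finset.sum_eq_add_sum_sdiff_singleton_of_mem (Finset.mem_univ i) _
                    omega
                  rw [hjs] at hIH
                  -- product decompositions
                  have hprod_upd : (∏ i', (((Function.update k i (k i - 1) i' - 1).choose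
                        (dvt i' - 1) : ℕ):ℝ))
                      = (((k i - 2).choose (dvt i - 1) : ℕ):ℝ) *
                        ∏ i' ∈ Finset.univ \ {i}, (((k i' - 1).choose (dvt i' - 1) : ℕ):ℝ) := by
                    have heq2 : (fun i' => (((Function.update k i (k i - 1) i' - 1).choose
                          (dvt i' - 1) : ℕ):ℝ))
                        = Function.update (fun i' => (((k i' - 1).choose (dvt i' - 1):ℕ):ℝ)) i
                          (((k i - 1 - 1).choose (dvt i - 1):ℕ):ℝ) := by
                      funext i'
                      rcases eq_or_ne i' i with rfl | hne
                      · rw [Function.update_self, Function.update_self]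
                      · rw [Function.update_of_ne hne, Function.update_of_ne hne]
                    rw [show (fun i' => (((Function.update k i (k i - 1) i' - 1).choose
                          (dvt i' - 1) : ℕ):ℝ)) = _ from heq2,
                      Finset.prod_update_of_mem (Finset.mem_univ i),
                      show k i - 1 - 1 = k i - 2 from by omega]
                  have hprod_k : (∏ i', (((k i' - 1).choose (dvt i' - 1) : ℕ):ℝ))
                      = (((k i - 1).choose (dvt i - 1) : ℕ):ℝ) *
                        ∏ i' ∈ Finset.univ \ {i}, (((k i' - 1).choose (dvt i' - 1) : ℕ):ℝ) :=
                    Finset.prod_eq_mul_prod_sdiff_singleton_of_mem (Finset.mem_univ i) _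
                  -- the choose identity
                  have hchoose : ∀ a b : ℕ, a ≤ b → 1 ≤ b →
                      b * (b-1).choose a = (b - a) * b.choose a := by
                    intro a b hab hb1
                    obtain ⟨c, rfl⟩ : ∃ c, b = c + 1 := ⟨b - 1, by omega⟩
                    simp only [Nat.add_sub_cancel]
                    rw [show c + 1 = Nat.succ c from rfl, Nat.add_one_mul_choose_eq c a,
                      Nat.choose_succ_right_eq (c+1) a]
                    ring
                  have hnat : (k i - 1) * (k i - 2).choose (dvt i - 1)
                      = (k i - dvt i) * (k i - 1).choose (dvt i - 1) := by
                    have h1 := hchoose (dvt i - 1) (k i - 1)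
                      (by have := hdpos i; omega) (by have := hdpos i; omega)
                    rw [show k i - 1 - 1 = k i - 2 from by omega,
                      show k i - 1 - (dvt i - 1) = k i - dvt i from by have := hdpos i; omega]
                      at h1
                    exact h1
                  have hnatR : ((k i:ℝ) - 1) * (((k i - 2).choose (dvt i - 1):ℕ):ℝ)
                      = ((k i:ℝ) - (dvt i:ℝ)) * (((k i - 1).choose (dvt i - 1):ℕ):ℝ) := by
                    have c1 : ((k i - 1 : ℕ):ℝ) = (k i:ℝ) - 1 := by
                      have := hk1 i
                      push_cast [Nat.cast_sub this]
                      norm_num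
                    have c2 : ((k i - dvt i : ℕ):ℝ) = (k i:ℝ) - (dvt i:ℝ) := by
                      have := hka i
                      push_cast [Nat.cast_sub this]
                      ring
                    calc ((k i:ℝ) - 1) * (((k i - 2).choose (dvt i - 1):ℕ):ℝ)
                        = ((k i - 1 : ℕ):ℝ) * (((k i - 2).choose (dvt i - 1):ℕ):ℝ) := by
                          rw [c1]
                      _ = (((k i - 1) * (k i - 2).choose (dvt i - 1) : ℕ):ℝ) := by
                          push_cast; ring
                      _ = (((k i - dvt i) * (k i - 1).choose (dvt i - 1) : ℕ):ℝ) := by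
                          rw [hnat]
                      _ = ((k i - dvt i:ℕ):ℝ) * (((k i - 1).choose (dvt i - 1):ℕ):ℝ) := by
                          push_cast; ring
                      _ = _ := by rw [c2]
                  have hcoeff0 : (0:ℝ) ≤ p * ((k i:ℝ) - 1)/(2*(τ:ℝ)+1) := by
                    apply div_nonneg _ h2τ.le
                    apply mul_nonneg hp0.le
                    have : (1:ℝ) ≤ (k i:ℝ) := by exact_mod_cast hk1 i
                    linarith
                  calc p * ((k i : ℝ) - 1) / (2*(τ:ℝ)+1) *
                        (μt {ω | ∀ i', Dt i' τ ω = Function.update k i (k i - 1) i'}).toReal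
                      ≤ p * ((k i : ℝ) - 1) / (2*(τ:ℝ)+1) *
                        ((∏ i', (((Function.update k i (k i - 1) i' - 1).choose
                          (dvt i' - 1) : ℕ):ℝ)) * Stmt8Aux.FF p (d:ℝ) n J τ) :=
                        mul_le_mul_of_nonneg_left hIH hcoeff0
                    _ = p * ((k i : ℝ) - (dvt i : ℝ)) / (2*(τ:ℝ)+1) *
                        ((∏ i', (((k i' - 1).choose (dvt i' - 1) : ℕ):ℝ)) *
                          Stmt8Aux.FF p (d:ℝ) n J τ) := by
                        rw [hprod_upd, hprod_k]
                        have hne2τ : (2*(τ:ℝ)+1) ≠ 0 := ne_of_gt h2τ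
                        linear_combination (p / (2*(τ:ℝ)+1) * Stmt8Aux.FF p (d:ℝ) n J τ *
                          (∏ i' ∈ Finset.univ \ {i}, (((k i' - 1).choose (dvt i' - 1) : ℕ):ℝ)))
                          * hnatR
              -- sum the jump bounds
              have hjsum : (∑ i, p * ((k i : ℝ) - (dvt i : ℝ)) / (2*(τ:ℝ)+1) *
                    ((∏ i', (((k i' - 1).choose (dvt i' - 1) : ℕ):ℝ)) *
                      Stmt8Aux.FF p (d:ℝ) n J τ))
                  = p * ((J:ℝ)+1) / (2*(τ:ℝ)+1) *
                    ((∏ i', (((k i' - 1).choose (dvt i' - 1) : ℕ):ℝ)) *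
                      Stmt8Aux.FF p (d:ℝ) n J τ) := by
                rw [← Finset.sum_mul]
                congr 1
                rw [← Finset.sum_div]
                congr 1
                rw [← Finset.mul_sum]
                congr 1
                have h1 : ∀ i ∈ Finset.univ (α := Fin l),
                    ((k i:ℝ) - (dvt i:ℝ)) = ((k i - dvt i : ℕ):ℝ) := by
                  intro i _
                  rw [Nat.cast_sub (hka i)]
                rw [Finset.sum_congr rfl h1, ← Nat.cast_sum, hJ]
                push_cast
                ring
              -- stay bound
              have hsumk : (∑ i, (k i:ℝ)) = (d:ℝ) + ((J:ℝ)+1) := by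
                have h1 : (∑ i, k i : ℕ) = d + (J+1) := by omega
                calc (∑ i, (k i:ℝ)) = ((∑ i, k i : ℕ):ℝ) := by push_cast; ring
                  _ = (d:ℝ) + ((J:ℝ)+1) := by rw [h1]; push_cast; ring
              have hIHk := ih' k
              rw [hJ] at hIHk
              have hg0 : (0:ℝ) ≤ (μt {ω | ∀ i, Dt i τ ω = k i}).toReal := ENNReal.toReal_nonneg
              have hstaybd : (1 - p * (∑ i, (k i:ℝ))/(2*(τ:ℝ)+1)) *
                    (μt {ω | ∀ i, Dt i τ ω = k i}).toReal
                  ≤ max 0 (1 - p * ((d:ℝ) + ((J:ℝ)+1))/(2*(τ:ℝ)+1)) *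
                    ((∏ i, (((k i - 1).choose (dvt i - 1) : ℕ):ℝ)) *
                      Stmt8Aux.FF p (d:ℝ) n (J+1) τ) := by
                rw [hsumk]
                rcases le_or_gt (1 - p * ((d:ℝ) + ((J:ℝ)+1))/(2*(τ:ℝ)+1)) 0 with hc | hc
                · have hl : (1 - p * ((d:ℝ) + ((J:ℝ)+1))/(2*(τ:ℝ)+1)) *
                      (μt {ω | ∀ i, Dt i τ ω = k i}).toReal ≤ 0 :=
                    mul_nonpos_iff.2 (Or.inr ⟨hc, hg0⟩)
                  refine le_trans hl (mul_nonneg (le_max_left _ _)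
                    (mul_nonneg hCC0 hFFJ10))
                · rw [max_eq_right hc.le]
                  exact mul_le_mul_of_nonneg_left hIHk hc.le
              have hjn : n + (J + 1) ≤ τ + 1 := by omega
              have hREQ := Stmt8Aux.REQS (dR := (d:ℝ)) hp0 hp1 hdR0 hn1 hpd hτ hjn
              calc (∑ i, p * ((k i : ℝ) - 1) / (2*(τ:ℝ)+1) *
                    (μt {ω | ∀ i', Dt i' τ ω = Function.update k i (k i - 1) i'}).toReal)
                  + (1 - p * (∑ i, (k i:ℝ))/(2*(τ:ℝ)+1)) *
                    (μt {ω | ∀ i, Dt i τ ω = k i}).toReal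
                  ≤ p * ((J:ℝ)+1) / (2*(τ:ℝ)+1) *
                      ((∏ i', (((k i' - 1).choose (dvt i' - 1) : ℕ):ℝ)) *
                        Stmt8Aux.FF p (d:ℝ) n J τ)
                    + max 0 (1 - p * ((d:ℝ) + ((J:ℝ)+1))/(2*(τ:ℝ)+1)) *
                      ((∏ i, (((k i - 1).choose (dvt i - 1) : ℕ):ℝ)) *
                        Stmt8Aux.FF p (d:ℝ) n (J+1) τ) := by
                    apply add_le_add _ hstaybd
                    exact le_trans (Finset.sum_le_sum fun i _ => hjump_i i) (le_of_eq hjsum)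
                _ = (∏ i, (((k i - 1).choose (dvt i - 1) : ℕ):ℝ)) *
                    (p * ((J:ℝ)+1) / (2*(τ:ℝ)+1) * Stmt8Aux.FF p (d:ℝ) n J τ
                      + max 0 (1 - p * ((d:ℝ) + ((J:ℝ)+1))/(2*(τ:ℝ)+1)) *
                        Stmt8Aux.FF p (d:ℝ) n (J+1) τ) := by ring
                _ ≤ (∏ i, (((k i - 1).choose (dvt i - 1) : ℕ):ℝ)) *
                    Stmt8Aux.FF p (d:ℝ) n (J+1) (τ+1) := mul_le_mul_of_nonneg_left hREQ hCC0
                _ = (∏ i, (((k i - 1).choose (dvt i - 1) : ℕ):ℝ)) *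
                    Stmt8Aux.FF p (d:ℝ) n (∑ i, (k i - dvt i)) (τ+1) := by rw [hJ]
    -- conclude from hmain at time t
    have hfin := hmain t hnt.le le_rfl (fun i => dvt i + rvt i)
    have hjr : (∑ i, ((fun i => dvt i + rvt i) i - dvt i)) = r := by
      rw [hr_def]
      refine Finset.sum_congr rfl fun i _ => ?_
      show dvt i + rvt i - dvt i = rvt i
      omega
    rw [hjr] at hfin
    have hCCeq : (∏ i, ((((fun i => dvt i + rvt i) i - 1).choose (dvt i - 1) : ℕ):ℝ))
        = ∏ i, (((rvt i + dvt i - 1).choose (dvt i - 1) : ℕ):ℝ) := by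
      refine Finset.prod_congr rfl fun i _ => ?_
      show (((dvt i + rvt i - 1).choose (dvt i - 1) : ℕ):ℝ) = _
      congr 2
      omega
    rw [hCCeq] at hfin
    have hCC0 : (0:ℝ) ≤ ∏ i, (((rvt i + dvt i - 1).choose (dvt i - 1) : ℕ):ℝ) :=
      Finset.prod_nonneg fun i _ => by positivity
    refine le_trans hfin ?_
    have hAA := Stmt8Aux.AA_le (p := p) (dR := (d:ℝ)) (n := n) hp0 hp1 hdR0 hn1 hpd hnt
    have hexp_le : Real.exp 1 ≤ Real.exp (2 + (n : ℝ) - p * (d : ℝ) / 2 +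
        3 * p * (r : ℝ) / (t : ℝ) ^ (p / 2)) := by
      apply Real.exp_le_exp.2
      have h1 : p * (d:ℝ) / 2 ≤ (n:ℝ) + 1/2 := by linarith
      have h2 : (0:ℝ) ≤ 3 * p * (r : ℝ) / (t : ℝ) ^ (p / 2) := by
        apply div_nonneg _ (Real.rpow_pos_of_pos ht0R _).le
        positivity
      linarith
    have hrpow0 : (0:ℝ) ≤ (((n : ℝ) + 1) / (t : ℝ)) ^ (p * (d:ℝ) / 2) :=
      Real.rpow_nonneg (by positivity) _
    calc (∏ i, (((rvt i + dvt i - 1).choose (dvt i - 1) : ℕ):ℝ)) *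
          Stmt8Aux.FF p (d:ℝ) n r t
        ≤ (∏ i, (((rvt i + dvt i - 1).choose (dvt i - 1) : ℕ):ℝ)) *
          Stmt8Aux.AA p (d:ℝ) n t :=
          mul_le_mul_of_nonneg_left (Stmt8Aux.FF_le_AA hp0 hn1) hCC0
      _ ≤ (∏ i, (((rvt i + dvt i - 1).choose (dvt i - 1) : ℕ):ℝ)) *
          ((((n : ℝ) + 1) / (t : ℝ)) ^ (p * (d:ℝ) / 2) * Real.exp 1) :=
          mul_le_mul_of_nonneg_left hAA hCC0
      _ ≤ (∏ i, (((rvt i + dvt i - 1).choose (dvt i - 1) : ℕ):ℝ)) *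
          ((((n : ℝ) + 1) / (t : ℝ)) ^ (p * (d:ℝ) / 2) *
            Real.exp (2 + (n : ℝ) - p * (d : ℝ) / 2 +
              3 * p * (r : ℝ) / (t : ℝ) ^ (p / 2))) := by
          apply mul_le_mul_of_nonneg_left _ hCC0
          exact mul_le_mul_of_nonneg_left hexp_le hrpow0
      _ = _ := by ring

end Main

/-- Lemma 2 (supernode degree evolution bound for GPA): let `(D t i τ)` be, for each
time horizon `t`, the degrees of `l` disjoint supernodes in a preferential-attachment
process with node-event probability `p`, with initial degrees `dv t i` at time `t0 t`,
at most one coordinate increasing by exactly one per step, and jump probabilities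
`p * D t i (τ-1) / (2 τ - 1)`.  If `d t = ∑ i, dv t i = o(t^(1/2))` and
`r t = ∑ i, rv t i = o(t^(2/3))`, then for all sufficiently large `t`,
`P[∀ i, D t i t = dv t i + rv t i] ≤ (∏ i, C(rv t i + dv t i - 1, dv t i - 1)) *
  ((t0 t + 1)/t)^(p d t / 2) * exp(2 + t0 t - p (d t) / 2 + 3 p (r t) / t^(p/2))`. -/
theorem stmt_8 (p : ℝ) (hp0 : 0 < p) (hp1 : p ≤ 1) (l : ℕ) (hl : 1 ≤ l)
    (Ω : ℕ → Type*) (mΩ : ∀ t : ℕ, MeasurableSpace (Ω t))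
    (μ : ∀ t : ℕ, Measure (Ω t)) (hprob : ∀ t, IsProbabilityMeasure (μ t))
    (ℱ : ∀ t : ℕ, Filtration ℕ (mΩ t))
    (t0 : ℕ → ℕ) (dv rv : ℕ → Fin l → ℕ)
    (D : ∀ t : ℕ, Fin l → ℕ → Ω t → ℕ)
    (ht0 : ∀ t : ℕ, 2 ≤ t → 1 ≤ t0 t ∧ t0 t < t)
    (hdpos : ∀ t i, 1 ≤ dv t i)
    (hinit : ∀ t i, ∀ᵐ ω ∂μ t, D t i (t0 t) ω = dv t i)
    (hadapted : ∀ t i τ, Measurable[ℱ t τ] (D t i τ))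
    (hstep : ∀ t τ : ℕ, t0 t < τ → τ ≤ t → ∀ᵐ ω ∂μ t,
      (∀ i, D t i τ ω = D t i (τ - 1) ω) ∨
        (∃ i, D t i τ ω = D t i (τ - 1) ω + 1 ∧
          ∀ j, j ≠ i → D t j τ ω = D t j (τ - 1) ω))
    (hcond : ∀ t : ℕ, ∀ i : Fin l, ∀ τ : ℕ, t0 t < τ → τ ≤ t →
      (μ t)[Set.indicator {ω | D t i τ ω = D t i (τ - 1) ω + 1} (fun _ => (1 : ℝ)) |
          ℱ t (τ - 1)]
        =ᵐ[μ t] fun ω => p * (D t i (τ - 1) ω : ℝ) / (2 * (τ : ℝ) - 1))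
    (hd : (fun t : ℕ => ((∑ i, dv t i : ℕ) : ℝ)) =o[atTop]
      fun t : ℕ => (t : ℝ) ^ ((1 : ℝ) / 2))
    (hr : (fun t : ℕ => ((∑ i, rv t i : ℕ) : ℝ)) =o[atTop]
      fun t : ℕ => (t : ℝ) ^ ((2 : ℝ) / 3)) :
    ∀ᶠ t : ℕ in atTop,
      (μ t {ω | ∀ i, D t i t ω = dv t i + rv t i}).toReal ≤
        (∏ i, ((rv t i + dv t i - 1).choose (dv t i - 1) : ℝ)) *
          (((t0 t : ℝ) + 1) / (t : ℝ)) ^ (p * ((∑ i, dv t i : ℕ) : ℝ) / 2) *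
          Real.exp (2 + (t0 t : ℝ) - p * ((∑ i, dv t i : ℕ) : ℝ) / 2 +
            3 * p * ((∑ i, rv t i : ℕ) : ℝ) / (t : ℝ) ^ (p / 2)) := by
  rw [Filter.eventually_atTop]
  refine ⟨2, fun t ht => ?_⟩
  obtain ⟨hn1, hnt⟩ := ht0 t ht
  haveI := hprob t
  have hstep2 : ∀ τ : ℕ, t0 t ≤ τ → τ + 1 ≤ t → ∀ᵐ ω ∂μ t,
      (∀ i, D t i (τ+1) ω = D t i τ ω) ∨
        (∃ i, D t i (τ+1) ω = D t i τ ω + 1 ∧ ∀ j, j ≠ i → D t j (τ+1) ω = D t j τ ω) := by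
    intro τ h1 h2
    have h := hstep t (τ+1) (by omega) h2
    simpa only [Nat.add_sub_cancel] using h
  have hcd2 : ∀ (i : Fin l) (τ : ℕ), t0 t ≤ τ → τ + 1 ≤ t →
      (μ t)[Set.indicator {ω | D t i (τ+1) ω = D t i τ ω + 1} (fun _ => (1:ℝ)) | ℱ t τ]
        =ᵐ[μ t] fun ω => p * (D t i τ ω : ℝ) / (2 * (τ:ℝ) + 1) := by
    intro i τ h1 h2
    have h := hcond t i (τ+1) (by omega) h2
    simp only [Nat.add_sub_cancel] at h
    refine h.trans (Filter.Eventually.of_forall fun ω => ?_)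
    push_cast
    ring
  exact stmt8_main (μ t) (ℱ t) hp0 hp1 (dv t) (rv t) (t0 t) t hn1 hnt (D t)
    (hdpos t) (hinit t) (hadapted t) hstep2 hcd2
end

section
/- Let $A$ be a real symmetric $n \times n$ matrix whose largest eigenvalue $\lambda_1(A)$ is nonnegative. Let $m \ge 1$ be an integer and let $C$ be an $n \times n'$ matrix with entries in $\{0,1\}$ such that every row of $C$ has exactly one nonzero entry and every column of $C$ has at least one and at most $m$ nonzero entries. Then the largest eigenvalue of the symmetric matrix $C^{T} A C$ satisfies $\lambda_1(C^{T} A C) \le m \, \lambda_1(A)$. -/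
open Matrix

lemma rayleigh_aux {n : ℕ} [NeZero n] (A : Matrix (Fin n) (Fin n) ℝ) (hA : A.IsHermitian)
    (x : Fin n → ℝ) : x ⬝ᵥ (A *ᵥ x) ≤ (⨆ i, hA.eigenvalues i) * (x ⬝ᵥ x) := by
  classical
  set μ := ⨆ i, hA.eigenvalues i with hμ
  have hle : ∀ i, hA.eigenvalues i ≤ μ := fun i => le_ciSup (Set.Finite.bddAbove (Set.finite_range _)) i
  set U : Matrix (Fin n) (Fin n) ℝ := (hA.eigenvectorUnitary : Matrix (Fin n) (Fin n) ℝ) with hU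
  have hstar : star U = Uᵀ := by
    rw [Matrix.star_eq_conjTranspose, Matrix.conjTranspose_eq_transpose_of_trivial]
  have hUU : U * Uᵀ = 1 := by
    rw [← hstar]
    exact Matrix.mem_unitaryGroup_iff.mp (hA.eigenvectorUnitary).2
  set w : Fin n → ℝ := Uᵀ *ᵥ x with hw
  have hw' : w = x ᵥ* U := Matrix.mulVec_transpose U x
  have hkey : x ⬝ᵥ (A *ᵥ x) = w ⬝ᵥ (Matrix.diagonal hA.eigenvalues *ᵥ w) := by
    conv_lhs => rw [hA.spectral_theorem]
    rw [RCLike.ofReal_real_eq_id, Unitary.conjStarAlgAut_apply]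
    rw [hstar, Matrix.mul_assoc, ← Matrix.mulVec_mulVec, Matrix.dotProduct_mulVec, ← hw',
      Matrix.mulVec_mulVec]
    simp [Function.comp]
  have hnorm : w ⬝ᵥ w = x ⬝ᵥ x := by
    calc w ⬝ᵥ w = (x ᵥ* U) ⬝ᵥ (Uᵀ *ᵥ x) := by rw [← hw', ← hw]
      _ = x ⬝ᵥ (U *ᵥ (Uᵀ *ᵥ x)) := (Matrix.dotProduct_mulVec x U _).symm
      _ = x ⬝ᵥ ((U * Uᵀ) *ᵥ x) := by rw [Matrix.mulVec_mulVec]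
      _ = x ⬝ᵥ x := by rw [hUU, Matrix.one_mulVec]
  rw [hkey]
  have : w ⬝ᵥ (Matrix.diagonal hA.eigenvalues *ᵥ w) ≤ μ * (w ⬝ᵥ w) := by
    rw [dotProduct, dotProduct, Finset.mul_sum]
    apply Finset.sum_le_sum
    intro i _
    rw [Matrix.mulVec_diagonal]
    have h1 : 0 ≤ w i * w i := mul_self_nonneg _
    calc w i * (hA.eigenvalues i * w i) = hA.eigenvalues i * (w i * w i) := by ring
      _ ≤ μ * (w i * w i) := mul_le_mul_of_nonneg_right (hle i) h1
  rw [hnorm] at this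
  exact this

/-- If `A` is a real symmetric `n × n` matrix whose largest eigenvalue is nonnegative,
and `C` is an `n × n'` 0/1 contraction matrix (each row has exactly one nonzero entry,
each column has at least one and at most `m` nonzero entries), then the largest
eigenvalue of `Cᵀ A C` is at most `m` times the largest eigenvalue of `A`. -/
theorem stmt_12 (n n' : ℕ) (hn : 0 < n) (hn' : 0 < n')
    (A : Matrix (Fin n) (Fin n) ℝ) (hA : A.IsHermitian)
    (m : ℕ) (hm : 1 ≤ m)
    (C : Matrix (Fin n) (Fin n') ℝ)
    (hC01 : ∀ i j, C i j = 0 ∨ C i j = 1)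
    (hrow : ∀ i : Fin n, ∃! j : Fin n', C i j ≠ 0)
    (hcol : ∀ j : Fin n',
      1 ≤ (Finset.univ.filter (fun i => C i j ≠ 0)).card ∧
        (Finset.univ.filter (fun i => C i j ≠ 0)).card ≤ m)
    (hB : (Cᵀ * A * C).IsHermitian)
    (hpos : 0 ≤ ⨆ i, hA.eigenvalues i) :
    (⨆ j, hB.eigenvalues j) ≤ (m : ℝ) * ⨆ i, hA.eigenvalues i := by
  classical
  haveI : NeZero n := ⟨hn.ne'⟩
  haveI : NeZero n' := ⟨hn'.ne'⟩
  set μ := ⨆ i, hA.eigenvalues i with hμ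
  obtain ⟨j0, hj0⟩ := exists_eq_ciSup_of_finite (f := hB.eigenvalues)
  set v : Fin n' → ℝ := ⇑(hB.eigenvectorBasis j0) with hv
  have hquad : hB.eigenvalues j0 = v ⬝ᵥ ((Cᵀ * A * C) *ᵥ v) := by
    simpa using hB.eigenvalues_eq j0
  have hvv : v ⬝ᵥ v = 1 := by
    have h1 : ‖hB.eigenvectorBasis j0‖ = 1 := hB.eigenvectorBasis.orthonormal.1 j0
    have h2 : (inner ℝ (hB.eigenvectorBasis j0) (hB.eigenvectorBasis j0) : ℝ) = 1 := by
      rw [real_inner_self_eq_norm_sq, h1]; norm_num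
    rw [← h2, PiLp.inner_apply]
    simp [dotProduct, hv, sq]
  -- the row selection function
  have hφ := fun i => (hrow i).choose_spec
  set φ : Fin n → Fin n' := fun i => (hrow i).choose with hφdef
  have hφ1 : ∀ i, C i (φ i) = 1 := fun i => ((hC01 i (φ i)).resolve_left (hφ i).1)
  have hφ0 : ∀ i j, j ≠ φ i → C i j = 0 := by
    intro i j hj
    by_contra h
    exact hj ((hφ i).2 j h)
  have hCv : C *ᵥ v = fun i => v (φ i) := by
    ext i
    rw [Matrix.mulVec, dotProduct]
    rw [Finset.sum_eq_single (φ i)]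
    · rw [hφ1 i, one_mul]
    · intro j _ hj; rw [hφ0 i j hj, zero_mul]
    · intro h; exact absurd (Finset.mem_univ _) h
  have hfilter : ∀ j, (Finset.univ.filter (fun i => φ i = j))
      = (Finset.univ.filter (fun i => C i j ≠ 0)) := by
    intro j
    apply Finset.filter_congr
    intro i _
    constructor
    · intro h; rw [← h, hφ1 i]; norm_num
    · intro h; exact ((hφ i).2 j h).symm
  have hcontr : (C *ᵥ v) ⬝ᵥ (C *ᵥ v) ≤ (m : ℝ) * (v ⬝ᵥ v) := by
    rw [hCv, dotProduct, dotProduct, Finset.mul_sum]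
    rw [← Finset.sum_fiberwise' Finset.univ φ (fun j => v j * v j)]
    apply Finset.sum_le_sum
    intro j _
    rw [Finset.sum_const, hfilter j, nsmul_eq_mul]
    apply mul_le_mul_of_nonneg_right _ (mul_self_nonneg _)
    exact_mod_cast (hcol j).2
  have hABC : v ⬝ᵥ ((Cᵀ * A * C) *ᵥ v) = (C *ᵥ v) ⬝ᵥ (A *ᵥ (C *ᵥ v)) := by
    rw [Matrix.mul_assoc, ← Matrix.mulVec_mulVec, Matrix.dotProduct_mulVec,
      Matrix.vecMul_transpose, ← Matrix.mulVec_mulVec]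
  calc (⨆ j, hB.eigenvalues j) = hB.eigenvalues j0 := hj0.symm
    _ = (C *ᵥ v) ⬝ᵥ (A *ᵥ (C *ᵥ v)) := by rw [hquad, hABC]
    _ ≤ μ * ((C *ᵥ v) ⬝ᵥ (C *ᵥ v)) := rayleigh_aux A hA _
    _ ≤ μ * ((m : ℝ) * (v ⬝ᵥ v)) := mul_le_mul_of_nonneg_left hcontr hpos
    _ = (m : ℝ) * μ := by rw [hvv]; ring
end
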